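/- arXiv:0912.3333 — 12 statements merged into one kernel-verified Lean document; each statement's English description precedes it below -/
import Mathlib

section
/- Let M, K be coprime positive integers, let δ : ℤ → ℂ, and let g : ℤ × ℤ → ℂ (written g_n^s). Define f^t_{m,n} := g_n^{tK−mM} for all t,m,n ∈ ℤ. Then f automatically satisfies the (M,K)-reduction constraint f^t_{m,n} = f^{t−M}_{m−K,n} for all t,m,n; and f satisfies the non-autonomous discrete KP equation with coefficients a(t)=0, b(m)=1, c(n)=1+δ_{n+1}, namely −δ_{n+1}·f^{t+1}_{m,n} f^t_{m+1,n+1} + (1+δ_{n+1})·f^t_{m+1,n} f^{t+1}_{m,n+1} − f^t_{m,n+1} f^{t+1}_{m+1,n} = 0 for all t,m,n ∈ ℤ, if and only if g satisfies the reduced bilinear equation (1+δ_{n+1})·g_n^s g_{n+1}^{s+M+K} = g_{n+1}^{s+M} g_n^{s+K} + δ_{n+1}·g_n^{s+M+K} g_{n+1}^s for all s,n ∈ ℤ. -/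
/-- The substitution `f^t_{m,n} = g_n^{tK - mM}` automatically satisfies the
`(M,K)`-reduction constraint, and (given `gcd(M,K)=1`) `f` satisfies the non-autonomous
discrete KP equation with coefficients `a(t)=0`, `b(m)=1`, `c(n)=1+δ_{n+1}` iff `g`
satisfies the reduced bilinear equation. -/
theorem reduced_ndKP_bilinear_iff (M K : ℕ) (hM : 0 < M) (hK : 0 < K)
    (hMK : Nat.Coprime M K) (δ : ℤ → ℂ) (g : ℤ → ℤ → ℂ) (f : ℤ → ℤ → ℤ → ℂ)
    (hf : ∀ t m n : ℤ, f t m n = g n (t * K - m * M)) :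
    (∀ t m n : ℤ, f t m n = f (t - M) (m - K) n) ∧
    ((∀ t m n : ℤ,
        -δ (n + 1) * (f (t + 1) m n * f t (m + 1) (n + 1)) +
          (1 + δ (n + 1)) * (f t (m + 1) n * f (t + 1) m (n + 1)) -
          f t m (n + 1) * f (t + 1) (m + 1) n = 0) ↔
      (∀ s n : ℤ,
        (1 + δ (n + 1)) * (g n s * g (n + 1) (s + M + K)) =
          g (n + 1) (s + M) * g n (s + K) +
            δ (n + 1) * (g n (s + M + K) * g (n + 1) s))) := by
  constructor
  · intro t m n
    rw [hf, hf]
    ring_nf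
  · constructor
    · intro h s n
      -- find t m with t*K - m*M = s + M
      have hco : IsCoprime (M : ℤ) (K : ℤ) := by
        rw [Int.isCoprime_iff_gcd_eq_one]
        exact_mod_cast hMK
      obtain ⟨a, b, hab⟩ := hco
      set t : ℤ := b * (s + M)
      set m : ℤ := -(a * (s + M))
      have hs : t * K - m * M = s + M := by
        have : t * K - m * M = (a * M + b * K) * (s + M) := by ring
        rw [this, hab, one_mul]
      have h2 := h t m n
      rw [hf, hf, hf, hf, hf, hf] at h2
      have e1 : (t + 1) * K - m * M = s + M + K := by rw [add_one_mul]; omega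
      have e2 : t * K - (m + 1) * M = s := by rw [add_one_mul]; omega
      have e3 : (t + 1) * K - (m + 1) * M = s + K := by
        rw [add_one_mul, add_one_mul]; omega
      rw [e1, e2, e3, hs] at h2
      linear_combination h2
    · intro h t m n
      rw [hf, hf, hf, hf, hf, hf]
      have h2 := h (t * K - m * M - M) n
      have e1 : t * K - m * M - M + M + K = (t + 1) * K - m * M := by
        rw [add_one_mul]; ring
      have e2 : t * K - m * M - M + M = t * K - m * M := by ring
      have e3 : t * K - m * M - M + K = (t + 1) * K - (m + 1) * M := by
        rw [add_one_mul, add_one_mul]; ring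
      have e4 : t * K - m * M - M = t * K - (m + 1) * M := by
        rw [add_one_mul]; ring
      rw [e1, e2, e3, e4] at h2
      have e5 : (t + 1) * K - (m + 1) * M + M = (t + 1) * K - m * M := by ring
      linear_combination h2
end

section
/- Let M, K be positive integers, let δ : ℤ → ℂ, and let g : ℤ × ℤ → ℂ (written g_n^t) be nowhere vanishing. Define I_n^t := (1+δ_{n+1})·g_n^t g_{n+1}^{t+K} / (g_{n+1}^t g_n^{t+K}) and V_n^t := δ_{n+1}·g_n^{t+K} g_{n+1}^{t−M+K} / (g_{n+1}^{t+K} g_n^{t−M+K}). If g satisfies the reduced bilinear equation (1+δ_{n+1})·g_n^s g_{n+1}^{s+M+K} = g_{n+1}^{s+M} g_n^{s+K} + δ_{n+1}·g_n^{s+M+K} g_{n+1}^s for all s,n ∈ ℤ, then I_n^t = I_{n−1}^{t−M} + V_n^{t−K} − V_{n−1}^t for all n,t ∈ ℤ (equation (kdv1) of the (M,K)-reduced non-autonomous discrete KP equation). -/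
/-- With `I_n^t` and `V_n^t` defined from a nowhere vanishing `g`, if `g`
satisfies the reduced bilinear equation then (kdv1) holds:
`I_n^t = I_{n-1}^{t-M} + V_n^{t-K} - V_{n-1}^t`. -/
theorem kdv1_of_bilinear (M K : ℕ) (hM : 0 < M) (hK : 0 < K)
    (δ : ℤ → ℂ) (g : ℤ → ℤ → ℂ) (hg : ∀ n t : ℤ, g n t ≠ 0)
    (I V : ℤ → ℤ → ℂ)
    (hI : ∀ n t : ℤ, I n t =
      (1 + δ (n + 1)) * (g n t * g (n + 1) (t + K)) / (g (n + 1) t * g n (t + K)))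
    (hV : ∀ n t : ℤ, V n t =
      δ (n + 1) * (g n (t + K) * g (n + 1) (t - M + K)) /
        (g (n + 1) (t + K) * g n (t - M + K)))
    (hbil : ∀ s n : ℤ,
      (1 + δ (n + 1)) * (g n s * g (n + 1) (s + M + K)) =
        g (n + 1) (s + M) * g n (s + K) +
          δ (n + 1) * (g n (s + M + K) * g (n + 1) s)) :
    ∀ n t : ℤ, I n t = I (n - 1) (t - M) + V n (t - K) - V (n - 1) t := by
  intro n t
  have h1 := hbil (t - M) n
  have h2 := hbil (t - M) (n - 1)
  have e1 : t - (M:ℤ) + M + K = t + K := by ring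
  have e2 : t - (M:ℤ) + M = t := by ring
  have e3 : n - (1:ℤ) + 1 = n := by ring
  have e4 : t - (K:ℤ) + K = t := by ring
  have e5 : t - (K:ℤ) - M + K = t - M := by ring
  rw [e1, e2] at h1
  rw [e1, e2, e3] at h2
  have A : I n t - V n (t - K) =
      g n t * g n (t - M + K) / (g n (t + K) * g n (t - M)) := by
    rw [hI, hV, e4, e5]
    field_simp [hg]
    linear_combination h1
  have B : I (n - 1) (t - M) - V (n - 1) t =
      g n t * g n (t - M + K) / (g n (t + K) * g n (t - M)) := by
    rw [hI, hV, e3]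
    field_simp [hg]
    linear_combination h2
  linear_combination A - B
end

section
/- Let M, K, N be positive integers with N ≥ 2, and let I, V : ℤ × ℤ → ℂ (written I_n^t, V_n^t) satisfy the periodicity I_{n+N}^t = I_n^t, V_{n+N}^t = V_n^t. Fix t ∈ ℤ. Then the matrix equation L_t(y) R_t(y) = R_{t−M}(y) L_{t−K}(y) holds for every y ∈ ℂ if and only if for every n ∈ ℤ one has I_n^t V_n^t = I_n^{t−M} V_n^{t−K} and I_{n+1}^t + V_n^t = I_n^{t−M} + V_{n+1}^{t−K}; the latter two families of equations are exactly the periodic (M,K)-reduced non-autonomous discrete KP equations (kdv2) and (kdv1) at time t. -/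
section auxLemmas

private theorem band_mul_aux (N : ℕ) (hN : 2 ≤ N) (d e : ℤ → ℂ) (y : ℂ) (i j : Fin N)
    (bandM' : ℕ → (ℤ → ℂ) → ℂ → Matrix (Fin N) (Fin N) ℂ)
    (hband : ∀ (d : ℤ → ℂ) (y : ℂ), bandM' N d y = Matrix.of fun i j : Fin N =>
      (if i = j then d ((i : ℕ) + 1 : ℕ) else 0) +
      (if (i : ℕ) + 1 = (j : ℕ) then 1 else 0) +
      (if (i : ℕ) = N - 1 ∧ (j : ℕ) = 0 then y else 0)) :
    (bandM' N d y * bandM' N e y) i j =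
      (if i = j then d ((i : ℕ) + 1 : ℕ) * e ((i : ℕ) + 1 : ℕ) else 0) +
      (if (i : ℕ) + 1 = (j : ℕ) then d ((i : ℕ) + 1 : ℕ) + e ((j : ℕ) + 1 : ℕ) else 0) +
      (if (i : ℕ) + 2 = (j : ℕ) then 1 else 0) +
      (if (i : ℕ) = N - 1 ∧ (j : ℕ) = 0 then y * (d ((i : ℕ) + 1 : ℕ) + e (1 : ℕ)) else 0) +
      (if (i : ℕ) = N - 1 ∧ (j : ℕ) = 1 then y else 0) +
      (if (i : ℕ) + 1 = N - 1 ∧ (j : ℕ) = 0 then y else 0) := by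
  have hi := i.isLt
  have hj := j.isLt
  rw [Matrix.mul_apply]
  simp only [hband, Matrix.of_apply, Fin.ext_iff]
  rw [Fin.sum_univ_eq_sum_range (fun m =>
    ((if (i:ℕ) = m then d ((i : ℕ) + 1 : ℕ) else 0) +
     (if (i : ℕ) + 1 = m then 1 else 0) +
     (if (i : ℕ) = N - 1 ∧ m = 0 then y else 0)) *
    ((if m = (j:ℕ) then e (m + 1 : ℕ) else 0) +
     (if m + 1 = (j : ℕ) then 1 else 0) +
     (if m = N - 1 ∧ (j : ℕ) = 0 then y else 0)))]
  simp only [add_mul, mul_ite, mul_one, mul_zero, ite_mul, zero_mul, one_mul,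
    Finset.sum_add_distrib, ite_and, Finset.sum_ite_eq, Finset.sum_ite_eq', Finset.mem_range]
  by_cases hiN : (i : ℕ) = N - 1
  · have fA : N - 1 < N := by omega
    have fB : ¬ (N - 1 + 1 < N) := by omega
    have fC : ¬ (N - 1 + 1 = (j:ℕ)) := by omega
    have fD : ¬ (N - 1 + 2 = (j:ℕ)) := by omega
    have fE : ¬ (N - 1 + 1 = N - 1) := by omega
    have f5 : ¬ ((0:ℕ) = N - 1) := by omega
    have f6 : (0:ℕ) < N := by omega
    simp only [hiN, fA, fB, fC, fD, fE, f5, f6, if_true, if_false,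
      Finset.sum_ite_eq', Finset.mem_range, mul_add, mul_ite, mul_zero, mul_one,
      zero_add, add_zero]
    have e0 : ((0:ℕ) = (j:ℕ)) = ((j:ℕ) = 0) := by simp [eq_comm]
    have e1 : ((1:ℕ) = (j:ℕ)) = ((j:ℕ) = 1) := by simp [eq_comm]
    simp only [e0, e1]
    by_cases g0 : (j:ℕ) = 0 <;> by_cases g1 : (j:ℕ) = 1 <;>
      simp [g0, g1, fA, fB, fC, fD, fE, f5] <;> first | ring | omega
  · have f1 : (i:ℕ) + 1 < N := by omega
    simp only [hiN, hi, f1, if_true, if_false, Finset.sum_const_zero,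
      mul_add, mul_ite, mul_zero, mul_one, add_zero]
    by_cases g : (i:ℕ) + 1 = (j:ℕ)
    · have g2 : ¬ ((i:ℕ) = (j:ℕ)) := by omega
      have g3 : ¬ ((i:ℕ) + 2 = (j:ℕ)) := by omega
      have g5 : ¬ ((i:ℕ) + 1 + 1 = (j:ℕ)) := by omega
      simp only [g, g2, g3, g5, if_true, if_false]
      rw [← g]
      rw [if_neg (show ¬((i:ℕ) + 1 + 1 = (i:ℕ) + 1) by omega)]
      ring
    · have g4 : ((i:ℕ) + 1 + 1 = (j:ℕ)) ↔ ((i:ℕ) + 2 = (j:ℕ)) := by omega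
      simp only [g, if_false, g4]
      ring

private theorem per_shift_aux (N : ℕ) (f : ℤ → ℤ → ℂ) (hf : ∀ n t : ℤ, f (n + N) t = f n t)
    (n t : ℤ) (k : ℤ) : f (n + N * k) t = f n t := by
  induction k using Int.induction_on with
  | zero => simp
  | succ m ih =>
      rw [show n + (N:ℤ) * ((m:ℤ) + 1) = n + N * m + N by ring, hf (n + N * m) t, ih]
  | pred m ih =>
      have h2 := hf (n + (N:ℤ) * (-(m:ℤ) - 1)) t
      rw [← h2, show n + (N:ℤ) * (-(m:ℤ) - 1) + N = n + (N:ℤ) * (-(m:ℤ)) by ring, ih]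

end auxLemmas

/-- The `N×N` matrix with diagonal entries `d 1, …, d N`, entries `1` on the
superdiagonal, entry `y` in the lower-left corner, and `0` elsewhere. -/
def bandM (N : ℕ) (d : ℤ → ℂ) (y : ℂ) : Matrix (Fin N) (Fin N) ℂ :=
  Matrix.of fun i j =>
    (if i = j then d ((i : ℕ) + 1 : ℕ) else 0) +
    (if (i : ℕ) + 1 = (j : ℕ) then 1 else 0) +
    (if (i : ℕ) = N - 1 ∧ (j : ℕ) = 0 then y else 0)

private theorem band_mul (N : ℕ) (hN : 2 ≤ N) (d e : ℤ → ℂ) (y : ℂ) (i j : Fin N) :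
    (bandM N d y * bandM N e y) i j =
      (if i = j then d ((i : ℕ) + 1 : ℕ) * e ((i : ℕ) + 1 : ℕ) else 0) +
      (if (i : ℕ) + 1 = (j : ℕ) then d ((i : ℕ) + 1 : ℕ) + e ((j : ℕ) + 1 : ℕ) else 0) +
      (if (i : ℕ) + 2 = (j : ℕ) then 1 else 0) +
      (if (i : ℕ) = N - 1 ∧ (j : ℕ) = 0 then y * (d ((i : ℕ) + 1 : ℕ) + e (1 : ℕ)) else 0) +
      (if (i : ℕ) = N - 1 ∧ (j : ℕ) = 1 then y else 0) +
      (if (i : ℕ) + 1 = N - 1 ∧ (j : ℕ) = 0 then y else 0) :=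
  band_mul_aux N hN d e y i j (fun _ d y => bandM N d y) (fun _ _ => rfl)

/-- For periodic families `I_n^t`, `V_n^t` and fixed `t`, the Lax matrix
equation `L_t(y) R_t(y) = R_{t-M}(y) L_{t-K}(y)` for all `y` is equivalent to the
periodic rndKP equations (kdv2) and (kdv1) at time `t`. -/
theorem lax_iff_rndKP (M K N : ℕ) (hM : 0 < M) (hK : 0 < K) (hN : 2 ≤ N)
    (I V : ℤ → ℤ → ℂ)
    (hIper : ∀ n t : ℤ, I (n + N) t = I n t)
    (hVper : ∀ n t : ℤ, V (n + N) t = V n t)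
    (t : ℤ) :
    (∀ y : ℂ,
        bandM N (fun n => V n t) y * bandM N (fun n => I n t) y =
          bandM N (fun n => I n (t - M)) y * bandM N (fun n => V n (t - K)) y) ↔
    (∀ n : ℤ,
        I n t * V n t = I n (t - M) * V n (t - K) ∧
        I (n + 1) t + V n t = I n (t - M) + V (n + 1) (t - K)) := by
  constructor
  · intro h
    -- extracted scalar equations
    have kdv2' : ∀ m : ℕ, 1 ≤ m → m ≤ N →
        V (m:ℤ) t * I (m:ℤ) t = I (m:ℤ) (t-M) * V (m:ℤ) (t-K) := by
      intro m h1 h2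
      have key := congrFun (congrFun (h 0) ⟨m-1, by omega⟩) (⟨m-1, by omega⟩ : Fin N)
      rw [band_mul N hN _ _ 0, band_mul N hN _ _ 0] at key
      simp only [if_pos rfl, zero_mul, mul_zero, ite_self, add_zero, zero_add, if_true,
        if_neg (show ¬((⟨m-1, by omega⟩ : Fin N) : ℕ) + 1 = ((⟨m-1, by omega⟩ : Fin N) : ℕ) by simp),
        if_neg (show ¬((⟨m-1, by omega⟩ : Fin N) : ℕ) + 2 = ((⟨m-1, by omega⟩ : Fin N) : ℕ) by simp)] at key
      rw [show ((m-1+1 : ℕ) : ℤ) = (m:ℤ) by omega] at key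
      exact key
    have kdv1' : ∀ m : ℕ, 1 ≤ m → m < N →
        V (m:ℤ) t + I ((m:ℤ)+1) t = I (m:ℤ) (t-M) + V ((m:ℤ)+1) (t-K) := by
      intro m h1 h2
      have key := congrFun (congrFun (h 0) ⟨m-1, by omega⟩) (⟨m, by omega⟩ : Fin N)
      rw [band_mul N hN _ _ 0, band_mul N hN _ _ 0] at key
      simp only [zero_mul, mul_zero, ite_self, add_zero, zero_add,
        if_pos (show ((⟨m-1, by omega⟩ : Fin N) : ℕ) + 1 = ((⟨m, by omega⟩ : Fin N) : ℕ) by simp; omega),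
        if_neg (show ¬(⟨m-1, by omega⟩ : Fin N) = (⟨m, by omega⟩ : Fin N) by simp [Fin.ext_iff]; omega),
        if_neg (show ¬((⟨m-1, by omega⟩ : Fin N) : ℕ) + 2 = ((⟨m, by omega⟩ : Fin N) : ℕ) by simp; omega)] at key
      rw [show ((m-1+1 : ℕ) : ℤ) = (m:ℤ) by omega, show ((m+1 : ℕ) : ℤ) = (m:ℤ)+1 by omega] at key
      exact key
    have corner : V (N:ℤ) t + I 1 t = I (N:ℤ) (t-M) + V 1 (t-K) := by
      have key := congrFun (congrFun (h 1) ⟨N-1, by omega⟩) (⟨0, by omega⟩ : Fin N)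
      rw [band_mul N hN _ _ 1, band_mul N hN _ _ 1] at key
      simp [Fin.ext_iff, show N-1+1 ≠ N-1 by omega, show N-1 ≠ 0 by omega] at key
      rw [show ((N-1:ℕ):ℤ)+1 = (N:ℤ) by omega] at key
      exact key
    intro n
    have hNpos : (0:ℤ) < (N:ℤ) := by exact_mod_cast (show 0 < N by omega)
    have hdm := Int.mul_ediv_add_emod (n-1) (N:ℤ)
    set q := (n-1) / (N:ℤ) with hq
    set r := (n-1) % (N:ℤ) with hr
    have hr0 : 0 ≤ r := Int.emod_nonneg _ (by omega)
    have hr1 : r < N := Int.emod_lt_of_pos _ hNpos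
    have hn' : n = (r + 1) + (N:ℤ) * q := by linarith [hdm]
    obtain ⟨s, hs⟩ : ∃ s : ℕ, (s:ℤ) = r + 1 := ⟨(r+1).toNat, Int.toNat_of_nonneg (by omega)⟩
    have hs1 : 1 ≤ s := by omega
    have hs2 : s ≤ N := by omega
    have eI := per_shift_aux N I hIper
    have eV := per_shift_aux N V hVper
    constructor
    · rw [hn', eI, eV, eI, eV, ← hs]
      linear_combination kdv2' s hs1 hs2
    · rw [hn', show (r+1) + (N:ℤ)*q + 1 = (r+2) + (N:ℤ)*q by ring, eI, eV, eI, eV]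
      by_cases hsN : s < N
      · have := kdv1' s hs1 hsN
        rw [hs] at this
        rw [show r + 2 = (r + 1) + 1 by ring]
        linear_combination this
      · have hsN' : (s:ℤ) = (N:ℤ) := by omega
        have hrN : r + 1 = (N:ℤ) := by omega
        rw [hrN, show r + 2 = (N:ℤ) + 1 by omega,
          show ((N:ℤ) + 1) = 1 + (N:ℤ) by ring, hIper 1 t, hVper 1 (t - K)]
        linear_combination corner
  · intro h y
    ext i j
    rw [band_mul N hN _ _ y i j, band_mul N hN _ _ y i j]
    have hT1 : (if i = j then V ((((i:ℕ) + 1 : ℕ)) : ℤ) t * I ((((i:ℕ) + 1 : ℕ)) : ℤ) t else 0)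
        = (if i = j then I ((((i:ℕ) + 1 : ℕ)) : ℤ) (t - M) * V ((((i:ℕ) + 1 : ℕ)) : ℤ) (t - K) else 0) := by
      split_ifs with hc
      · linear_combination (h ((((i:ℕ) + 1 : ℕ)) : ℤ)).1
      · rfl
    have hT2 : (if (i:ℕ) + 1 = (j:ℕ) then V ((((i:ℕ) + 1 : ℕ)) : ℤ) t + I ((((j:ℕ) + 1 : ℕ)) : ℤ) t else 0)
        = (if (i:ℕ) + 1 = (j:ℕ) then I ((((i:ℕ) + 1 : ℕ)) : ℤ) (t - M) + V ((((j:ℕ) + 1 : ℕ)) : ℤ) (t - K) else 0) := by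
      split_ifs with hc
      · rw [show ((((j:ℕ) + 1 : ℕ)) : ℤ) = ((((i:ℕ) + 1 : ℕ)) : ℤ) + 1 by omega]
        linear_combination (h ((((i:ℕ) + 1 : ℕ)) : ℤ)).2
      · rfl
    have hT4 : (if (i:ℕ) = N - 1 ∧ (j:ℕ) = 0 then y * (V ((((i:ℕ) + 1 : ℕ)) : ℤ) t + I (((1:ℕ)) : ℤ) t) else 0)
        = (if (i:ℕ) = N - 1 ∧ (j:ℕ) = 0 then y * (I ((((i:ℕ) + 1 : ℕ)) : ℤ) (t - M) + V (((1:ℕ)) : ℤ) (t - K)) else 0) := by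
      split_ifs with hc
      · rw [show ((((i:ℕ) + 1 : ℕ)) : ℤ) = (N : ℤ) by omega, Nat.cast_one]
        have h2 := (h (N : ℤ)).2
        rw [show ((N:ℤ) + 1) = 1 + (N:ℤ) by ring, hIper 1 t, hVper 1 (t - K)] at h2
        linear_combination y * h2
      · rfl
    rw [hT1, hT2, hT4]
end

section
/- Let M, K, N be positive integers and let (L_s)_{s∈ℤ} and (R_s)_{s∈ℤ} be families of N×N complex matrices satisfying L_s R_s = R_{s−M} L_{s−K} for every s ∈ ℤ. Define X_t := L_{t−(K−1)M} ⋯ L_{t−2M} L_{t−M} L_t · R_t R_{t−K} R_{t−2K} ⋯ R_{t−(M−1)K}. Then for every t ∈ ℤ one has X_t R_{t−MK} = R_{t−MK} X_{t−K}. -/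
private lemma aux_B (K N : ℕ) (R : ℤ → Matrix (Fin N) (Fin N) ℂ) :
    ∀ (n : ℕ) (t : ℤ),
      (((List.range n).map fun (j : ℕ) => R (t - (j : ℤ) * (K : ℤ))).prod) * R (t - (n : ℤ) * K) =
      R t * (((List.range n).map fun (j : ℕ) => R ((t - K) - (j : ℤ) * (K : ℤ))).prod) := by
  intro n
  induction n with
  | zero => intro t; simp
  | succ n ih =>
      intro t
      rw [List.range_succ, List.map_append, List.prod_append, List.map_append,
        List.prod_append]
      simp only [List.map_cons, List.map_nil, List.prod_cons, List.prod_nil, mul_one]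
      have h1 : (t : ℤ) - (↑(n + 1)) * K = (t - K) - (n : ℤ) * K := by push_cast; ring
      rw [h1, mul_assoc, ← mul_assoc _ (R (t - (n : ℤ) * K)), ih t, mul_assoc]

private lemma aux_A (M K N : ℕ) (L R : ℤ → Matrix (Fin N) (Fin N) ℂ)
    (hLax : ∀ s : ℤ, L s * R s = R (s - M) * L (s - K)) :
    ∀ (n : ℕ) (t : ℤ),
      (((List.range n).reverse.map fun (j : ℕ) => L (t - (j : ℤ) * (M : ℤ))).prod) * R t =
      R (t - (n : ℤ) * M) *
        (((List.range n).reverse.map fun (j : ℕ) => L ((t - K) - (j : ℤ) * (M : ℤ))).prod) := by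
  intro n
  induction n with
  | zero => intro t; simp
  | succ n ih =>
      intro t
      rw [List.range_succ, List.reverse_append]
      simp only [List.reverse_singleton, List.map_cons, List.map_nil, List.prod_cons,
        List.nil_append, List.singleton_append, List.map_cons, List.prod_cons]
      rw [mul_assoc, ih t, ← mul_assoc, hLax (t - (n : ℤ) * M), mul_assoc]
      have h1 : (t : ℤ) - (n : ℤ) * M - M = t - (↑(n + 1)) * M := by push_cast; ring
      have h2 : (t : ℤ) - (n : ℤ) * M - K = (t - K) - (n : ℤ) * M := by ring
      rw [h1, h2]

private lemma flat_eq : ∀ (l : List ℕ), (l.flatMap fun a => [((a : ℕ) : ℤ)]) = l.map (fun a => ((a : ℕ) : ℤ)) := by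
  intro l
  induction l with
  | nil => rfl
  | cons a l ih => simp [List.flatMap_cons, ih]

/-- If `L_s R_s = R_{s-M} L_{s-K}` for all `s`, then the ordered product
`X_t = L_{t-(K-1)M} ⋯ L_{t-M} L_t · R_t R_{t-K} ⋯ R_{t-(M-1)K}` satisfies
`X_t R_{t-MK} = R_{t-MK} X_{t-K}`. -/
theorem Xt_R_commutation (M K N : ℕ) (hM : 0 < M) (hK : 0 < K) (hN : 0 < N)
    (L R : ℤ → Matrix (Fin N) (Fin N) ℂ)
    (hLax : ∀ s : ℤ, L s * R s = R (s - M) * L (s - K))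
    (X : ℤ → Matrix (Fin N) (Fin N) ℂ)
    (hX : ∀ t : ℤ, X t =
      (((List.range K).reverse.map fun j => L (t - (j : ℤ) * (M : ℤ))).prod) *
      (((List.range M).map fun j => R (t - (j : ℤ) * (K : ℤ))).prod)) :
    ∀ t : ℤ, X t * R (t - (M : ℤ) * (K : ℤ)) = R (t - (M : ℤ) * (K : ℤ)) * X (t - K) := by
  have hX' : ∀ t : ℤ, X t =
      (((List.range K).reverse.map fun (j : ℕ) => L (t - (j : ℤ) * (M : ℤ))).prod) *
      (((List.range M).map fun (j : ℕ) => R (t - (j : ℤ) * (K : ℤ))).prod) := by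
    intro t
    rw [hX t]
    congr 1 <;> simp [flat_eq, List.map_map, Function.comp_def]
  intro t
  rw [hX' t, hX' (t - K)]
  rw [mul_assoc, aux_B K N R M t, ← mul_assoc, aux_A M K N L R hLax K t, mul_assoc]
  have h1 : (t : ℤ) - (K : ℤ) * M = t - (M : ℤ) * K := by ring
  rw [h1]
end

section
/- Let M, K, N be positive integers and let (L_s)_{s∈ℤ} and (R_s)_{s∈ℤ} be families of N×N complex matrices satisfying L_s R_s = R_{s−M} L_{s−K} for every s ∈ ℤ. Define X_t := L_{t−(K−1)M} ⋯ L_{t−2M} L_{t−M} L_t · R_t R_{t−K} R_{t−2K} ⋯ R_{t−(M−1)K}. Then for every t ∈ ℤ one has L_{t−MK} X_t = X_{t−M} L_{t−MK}. -/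
private lemma flatMap_single {α : Type*} (l : List ℕ) (f : ℕ → α) :
    (l.flatMap fun a => [f a]) = l.map f := by
  induction l with
  | nil => rfl
  | cons a l ih => simp [List.flatMap_cons, ih]

private lemma norm_map_range {α : Type*} (l : List ℕ) (g : ℤ → α) :
    (List.map g (do let a ← l; pure ((a : ℤ) : ℤ))) = l.map (fun a : ℕ => g a) := by
  simp only [List.pure_def, List.bind_eq_flatMap, List.map_flatMap, List.map_cons, List.map_nil]
  exact flatMap_single l _

private lemma lemA (M K N : ℕ) (L : ℤ → Matrix (Fin N) (Fin N) ℂ) (t : ℤ) :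
    L (t - (K : ℤ) * (M : ℤ)) *
      (((List.range K).reverse.map fun j : ℕ => L (t - (j : ℤ) * (M : ℤ))).prod) =
    (((List.range K).reverse.map fun j : ℕ => L (t - (M : ℤ) - (j : ℤ) * (M : ℤ))).prod) * L t := by
  have h1 : (((List.range (K+1)).reverse.map fun j : ℕ => L (t - (j : ℤ) * (M : ℤ))).prod)
      = L (t - (K : ℤ) * (M : ℤ)) *
        (((List.range K).reverse.map fun j : ℕ => L (t - (j : ℤ) * (M : ℤ))).prod) := by
    rw [List.range_succ, List.reverse_append]
    simp
  have h2 : (((List.range (K+1)).reverse.map fun j : ℕ => L (t - (j : ℤ) * (M : ℤ))).prod)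
      = (((List.range K).reverse.map fun j : ℕ => L (t - (M : ℤ) - (j : ℤ) * (M : ℤ))).prod)
        * L t := by
    rw [List.range_succ_eq_map]
    simp only [List.reverse_cons, List.map_append, List.prod_append, List.map_reverse,
      List.map_map, List.map_cons, List.map_nil, List.prod_cons, List.prod_nil]
    congr 2
    · congr 1
      refine List.map_congr_left fun j _ => ?_
      simp only [Function.comp]
      push_cast
      ring_nf
    · simp
  rw [← h1, h2]

private lemma lemB (M K N : ℕ) (L R : ℤ → Matrix (Fin N) (Fin N) ℂ)
    (hLax : ∀ s : ℤ, L s * R s = R (s - M) * L (s - K)) :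
    ∀ n : ℕ, ∀ t : ℤ, L t * (((List.range n).map fun j : ℕ => R (t - (j : ℤ) * (K : ℤ))).prod)
      = (((List.range n).map fun j : ℕ => R (t - (M : ℤ) - (j : ℤ) * (K : ℤ))).prod)
        * L (t - (n : ℤ) * (K : ℤ)) := by
  intro n
  induction n with
  | zero => intro t; simp
  | succ n ih =>
    intro t
    rw [List.range_succ_eq_map, List.map_cons, List.map_cons, List.prod_cons, List.prod_cons,
      List.map_map, List.map_map]
    have e1 : ((fun j : ℕ => R (t - (j : ℤ) * (K : ℤ))) ∘ Nat.succ)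
        = fun j : ℕ => R (t - (K : ℤ) - (j : ℤ) * (K : ℤ)) := by
      funext j; simp only [Function.comp]; push_cast; ring_nf
    have e2 : ((fun j : ℕ => R (t - (M : ℤ) - (j : ℤ) * (K : ℤ))) ∘ Nat.succ)
        = fun j : ℕ => R (t - (K : ℤ) - (M : ℤ) - (j : ℤ) * (K : ℤ)) := by
      funext j; simp only [Function.comp]; push_cast; ring_nf
    rw [e1, e2]
    have key := ih (t - (K : ℤ))
    calc L t * (R (t - ((0:ℕ):ℤ) * (K:ℤ)) *
            (((List.range n).map fun j : ℕ => R (t - (K:ℤ) - (j : ℤ) * (K : ℤ))).prod))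
        = (L t * R t) *
            (((List.range n).map fun j : ℕ => R (t - (K:ℤ) - (j : ℤ) * (K : ℤ))).prod) := by
          rw [← mul_assoc]
          norm_num
      _ = R (t - (M:ℤ)) * (L (t - (K:ℤ)) *
            (((List.range n).map fun j : ℕ => R (t - (K:ℤ) - (j : ℤ) * (K : ℤ))).prod)) := by
          rw [hLax t, mul_assoc]
      _ = R (t - (M:ℤ)) * ((((List.range n).map fun j : ℕ =>
            R (t - (K:ℤ) - (M:ℤ) - (j : ℤ) * (K : ℤ))).prod)
            * L (t - (K:ℤ) - (n:ℤ) * (K:ℤ))) := by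
          rw [key]
      _ = (R (t - (M:ℤ) - ((0:ℕ):ℤ) * (K:ℤ)) * (((List.range n).map fun j : ℕ =>
            R (t - (K:ℤ) - (M:ℤ) - (j : ℤ) * (K : ℤ))).prod))
            * L (t - ((n:ℕ)+1 : ℕ) * (K:ℤ)) := by
          rw [mul_assoc]
          norm_num
          congr 2
          push_cast
          ring
      _ = _ := rfl

/-- If `L_s R_s = R_{s-M} L_{s-K}` for all `s`, then the ordered product
`X_t = L_{t-(K-1)M} ⋯ L_{t-M} L_t · R_t R_{t-K} ⋯ R_{t-(M-1)K}` satisfies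
`L_{t-MK} X_t = X_{t-M} L_{t-MK}`. -/
theorem L_Xt_commutation (M K N : ℕ) (hM : 0 < M) (hK : 0 < K) (hN : 0 < N)
    (L R : ℤ → Matrix (Fin N) (Fin N) ℂ)
    (hLax : ∀ s : ℤ, L s * R s = R (s - M) * L (s - K))
    (X : ℤ → Matrix (Fin N) (Fin N) ℂ)
    (hX : ∀ t : ℤ, X t =
      (((List.range K).reverse.map fun j => L (t - (j : ℤ) * (M : ℤ))).prod) *
      (((List.range M).map fun j => R (t - (j : ℤ) * (K : ℤ))).prod)) :
    ∀ t : ℤ, L (t - (M : ℤ) * (K : ℤ)) * X t = X (t - M) * L (t - (M : ℤ) * (K : ℤ)) := by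
  have hX' : ∀ t : ℤ, X t =
      (((List.range K).reverse.map fun j : ℕ => L (t - (j : ℤ) * (M : ℤ))).prod) *
      (((List.range M).map fun j : ℕ => R (t - (j : ℤ) * (K : ℤ))).prod) := by
    intro t
    rw [hX t, norm_map_range, norm_map_range]
  intro t
  rw [hX' t, hX' (t - M)]
  have hcomm : t - (M : ℤ) * (K : ℤ) = t - (K : ℤ) * (M : ℤ) := by ring
  rw [hcomm, ← mul_assoc, lemA M K N L t, mul_assoc, lemB M K N L R hLax M t, ← mul_assoc]
  congr 2 <;> · funext <;> ring_nf
end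

section
/- Let M, K, N be positive integers and let (L_s)_{s∈ℤ} and (R_s)_{s∈ℤ} be families of N×N complex matrices satisfying L_s R_s = R_{s−M} L_{s−K} for every s ∈ ℤ. Define X_t := L_{t−(K−1)M} ⋯ L_{t−2M} L_{t−M} L_t · R_t R_{t−K} R_{t−2K} ⋯ R_{t−(M−1)K}. Then for every t ∈ ℤ one also has the alternative factorisation X_t = R_{t−MK} R_{t−(M+1)K} ⋯ R_{t−(2M−1)K} · L_{t−(2K−1)M} ⋯ L_{t−(K+1)M} L_{t−KM}, where the R-factors are ordered with indices t−(M+j)K for j = 0,1,…,M−1 from left to right, and the L-factors with indices t−(K+j)M for j = K−1,…,1,0 from left to right. -/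
/-- If `L_s R_s = R_{s-M} L_{s-K}` for all `s`, then the product
`X_t = L_{t-(K-1)M} ⋯ L_t · R_t ⋯ R_{t-(M-1)K}` admits the alternative factorisation
`X_t = R_{t-MK} R_{t-(M+1)K} ⋯ R_{t-(2M-1)K} · L_{t-(2K-1)M} ⋯ L_{t-(K+1)M} L_{t-KM}`. -/
theorem Xt_alternative_factorisation (M K N : ℕ) (hM : 0 < M) (hK : 0 < K) (hN : 0 < N)
    (L R : ℤ → Matrix (Fin N) (Fin N) ℂ)
    (hLax : ∀ s : ℤ, L s * R s = R (s - M) * L (s - K))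
    (X : ℤ → Matrix (Fin N) (Fin N) ℂ)
    (hX : ∀ t : ℤ, X t =
      (((List.range K).reverse.map fun j => L (t - (j : ℤ) * (M : ℤ))).prod) *
      (((List.range M).map fun j => R (t - (j : ℤ) * (K : ℤ))).prod)) :
    ∀ t : ℤ, X t =
      (((List.range M).map fun j => R (t - ((M : ℤ) + (j : ℤ)) * (K : ℤ))).prod) *
      (((List.range K).reverse.map fun j => L (t - ((K : ℤ) + (j : ℤ)) * (M : ℤ))).prod) := by
  have lem1 : ∀ (k : ℕ) (s : ℤ),
      ((List.range k).reverse.map fun j : ℕ => L (s - (j : ℤ) * (M : ℤ))).prod * R s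
        = R (s - (k : ℤ) * (M : ℤ)) *
          ((List.range k).reverse.map fun j : ℕ => L (s - (K : ℤ) - (j : ℤ) * (M : ℤ))).prod := by
    intro k
    induction k with
    | zero => intro s; simp
    | succ k ih =>
      intro s
      rw [List.range_succ, List.reverse_append, List.reverse_singleton, List.singleton_append,
        List.map_cons, List.prod_cons, List.map_cons, List.prod_cons, mul_assoc, ih s,
        ← mul_assoc, hLax (s - (k : ℤ) * (M : ℤ))]
      have e1 : s - (k : ℤ) * (M : ℤ) - (M : ℤ) = s - ((k + 1 : ℕ) : ℤ) * (M : ℤ) := by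
        push_cast; ring
      have e2 : s - (k : ℤ) * (M : ℤ) - (K : ℤ) = s - (K : ℤ) - (k : ℤ) * (M : ℤ) := by ring
      rw [e1, e2, mul_assoc]
  have lem2 : ∀ (m : ℕ) (s : ℤ),
      ((List.range K).reverse.map fun j : ℕ => L (s - (j : ℤ) * (M : ℤ))).prod *
        ((List.range m).map fun j : ℕ => R (s - (j : ℤ) * (K : ℤ))).prod
      = ((List.range m).map fun j : ℕ => R (s - (j : ℤ) * (K : ℤ) - (K : ℤ) * (M : ℤ))).prod *
        ((List.range K).reverse.map fun j : ℕ =>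
          L (s - (m : ℤ) * (K : ℤ) - (j : ℤ) * (M : ℤ))).prod := by
    intro m
    induction m with
    | zero => intro s; simp
    | succ m ih =>
      intro s
      rw [List.range_succ, List.map_append, List.prod_append, List.map_append, List.prod_append,
        List.map_singleton, List.prod_singleton, List.map_singleton, List.prod_singleton,
        ← mul_assoc, ih s, mul_assoc]
      rw [lem1 K (s - (m : ℤ) * (K : ℤ))]
      have e3 : s - ((m + 1 : ℕ) : ℤ) * (K : ℤ)
          = s - (m : ℤ) * (K : ℤ) - (K : ℤ) := by push_cast; ring
      rw [e3, mul_assoc]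
  intro t
  have e1 : ∀ j : ℕ, t - ((M : ℤ) + (j : ℤ)) * (K : ℤ)
      = t - (j : ℤ) * (K : ℤ) - (K : ℤ) * (M : ℤ) := fun j => by ring
  have e2 : ∀ j : ℕ, t - ((K : ℤ) + (j : ℤ)) * (M : ℤ)
      = t - (M : ℤ) * (K : ℤ) - (j : ℤ) * (M : ℤ) := fun j => by ring
  have hcast : ∀ (l : List ℕ), (l.flatMap fun a => [((a : ℕ) : ℤ)]) = l.map (fun a => ((a : ℕ) : ℤ)) := by
    intro l; induction l with
    | nil => simp
    | cons b l ih => simp [ih]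
  simp only [List.pure_def, List.bind_eq_flatMap, hcast, List.map_map, Function.comp_def,
    e1, e2] at hX ⊢
  rw [hX t, lem2 M t]
end

section
/- Let M, K, N be positive integers with gcd(M,K) = 1 and N ≥ 2, and let I, V : ℤ × ℤ → ℂ (written I_n^t, V_n^t) satisfy the periodicity I_{n+N}^t = I_n^t, V_{n+N}^t = V_n^t and the Lax equations L_s(y) R_s(y) = R_{s−M}(y) L_{s−K}(y) for all s ∈ ℤ and all y ∈ ℂ. Then the characteristic polynomial of X_t(y) is independent of t: for every t ∈ ℤ and every y ∈ ℂ, the matrices X_t(y) and X_{t+1}(y) have the same characteristic polynomial. -/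
/-- The Lax matrix
`X_t(y) = L_{t-(K-1)M}(y) ⋯ L_{t-M}(y) L_t(y) · R_t(y) R_{t-K}(y) ⋯ R_{t-(M-1)K}(y)`,
where `L_s(y) = bandM N (V · s) y` and `R_s(y) = bandM N (I · s) y`. -/
noncomputable def XmatM (M K N : ℕ) (I V : ℤ → ℤ → ℂ) (t : ℤ) (y : ℂ) : Matrix (Fin N) (Fin N) ℂ :=
  (((List.range K).reverse.map fun j =>
      bandM N (fun n => V n (t - (j : ℤ) * (M : ℤ))) y).prod) *
  (((List.range M).map fun j =>
      bandM N (fun n => I n (t - (j : ℤ) * (K : ℤ))) y).prod)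

open Matrix Polynomial

lemma eval_charpoly' {n : ℕ} (A : Matrix (Fin n) (Fin n) ℂ) (x : ℂ) :
    A.charpoly.eval x = (x • (1 : Matrix (Fin n) (Fin n) ℂ) - A).det := by
  rw [Matrix.charpoly, ← Polynomial.coe_evalRingHom, RingHom.map_det]
  congr 1
  ext i j
  by_cases h : i = j
  · subst h
    simp [Matrix.charmatrix_apply_eq, Matrix.smul_apply, Matrix.one_apply]
  · simp [Matrix.charmatrix_apply_ne _ _ _ h, Matrix.smul_apply, Matrix.one_apply_ne h,
      Matrix.sub_apply]

lemma charpoly_mul_comm' {n : ℕ} (A B : Matrix (Fin n) (Fin n) ℂ) :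
    (A * B).charpoly = (B * A).charpoly := by
  apply Polynomial.eq_of_infinite_eval_eq
  apply Set.Infinite.mono (s := {x : ℂ | x ≠ 0})
  · intro x hx
    have hx' : (x : ℂ) ≠ 0 := hx
    simp only [Set.mem_setOf_eq, eval_charpoly']
    have h1 : x • (1 : Matrix (Fin n) (Fin n) ℂ) - A * B
        = x • ((1 : Matrix (Fin n) (Fin n) ℂ) - (x⁻¹ • A) * B) := by
      rw [smul_sub, smul_mul_assoc, smul_smul, mul_inv_cancel₀ hx', one_smul]
    have h2 : x • (1 : Matrix (Fin n) (Fin n) ℂ) - B * A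
        = x • ((1 : Matrix (Fin n) (Fin n) ℂ) - B * (x⁻¹ • A)) := by
      rw [smul_sub, mul_smul_comm, smul_smul, mul_inv_cancel₀ hx', one_smul]
    rw [h1, h2, det_smul, det_smul, Matrix.det_one_sub_mul_comm]
  · exact Set.infinite_of_injective_forall_mem (f := fun t : ℕ => (t : ℂ) + 1)
      (fun a b h => by exact_mod_cast (by simpa using h : (a:ℂ) = b))
      (fun t => by
        intro h
        exact Nat.cast_add_one_ne_zero (R := ℂ) t (by push_cast at h ⊢; exact h))

section Aux

variable {N : ℕ}

/-- left-ordered product `L (t-(k-1)s) ⋯ L (t-s) L t` -/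
noncomputable def Pp (s : ℕ) (L : ℤ → Matrix (Fin N) (Fin N) ℂ) (k : ℕ) (t : ℤ) :
    Matrix (Fin N) (Fin N) ℂ :=
  ((List.range k).reverse.map fun j => L (t - (j : ℤ) * (s : ℤ))).prod

/-- right-ordered product `R t R (t-s) ⋯ R (t-(m-1)s)` -/
noncomputable def Qp (s : ℕ) (R : ℤ → Matrix (Fin N) (Fin N) ℂ) (m : ℕ) (t : ℤ) :
    Matrix (Fin N) (Fin N) ℂ :=
  ((List.range m).map fun j => R (t - (j : ℤ) * (s : ℤ))).prod

variable (s : ℕ) (L R : ℤ → Matrix (Fin N) (Fin N) ℂ)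

lemma Pp_zero (t : ℤ) : Pp s L 0 t = 1 := by simp [Pp]

lemma Pp_succ_left (k : ℕ) (t : ℤ) :
    Pp s L (k + 1) t = L (t - (k : ℤ) * (s : ℤ)) * Pp s L k t := by
  simp [Pp, List.range_succ]

lemma Qp_zero (t : ℤ) : Qp s R 0 t = 1 := by simp [Qp]

lemma Qp_succ_right (m : ℕ) (t : ℤ) :
    Qp s R (m + 1) t = Qp s R m t * R (t - (m : ℤ) * (s : ℤ)) := by
  simp [Qp, List.range_succ]

lemma Pp_succ_right (k : ℕ) (t : ℤ) :
    Pp s L (k + 1) t = Pp s L k (t - (s : ℤ)) * L t := by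
  induction k generalizing t with
  | zero => simp [Pp, List.range_succ]
  | succ k ih =>
      rw [Pp_succ_left, ih, Pp_succ_left, ← mul_assoc]
      have h : t - ((k : ℤ) + 1) * (s : ℤ) = t - (s : ℤ) - (k : ℤ) * (s : ℤ) := by ring
      push_cast
      rw [h]

lemma Qp_succ_left (m : ℕ) (t : ℤ) :
    Qp s R (m + 1) t = R t * Qp s R m (t - (s : ℤ)) := by
  induction m generalizing t with
  | zero => simp [Qp, List.range_succ]
  | succ m ih =>
      have e : t - ((m + 1 : ℕ) : ℤ) * (s : ℤ) = t - (s : ℤ) - (m : ℤ) * (s : ℤ) := by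
        push_cast; ring
      rw [Qp_succ_right, ih, mul_assoc, e, Qp_succ_right]

end Aux

section Swap

variable {N : ℕ} (M K : ℕ) (L R : ℤ → Matrix (Fin N) (Fin N) ℂ)
variable (hLax : ∀ s : ℤ, L s * R s = R (s - (M : ℤ)) * L (s - (K : ℤ)))

include hLax in
/-- push one `R` leftwards through a block of `k` `L`'s -/
lemma swapR : ∀ (k : ℕ) (t : ℤ),
    Pp M L k t * R t = R (t - (k : ℤ) * (M : ℤ)) * Pp M L k (t - (K : ℤ)) := by
  intro k
  induction k with
  | zero => intro t; simp [Pp_zero]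
  | succ k ih =>
      intro t
      rw [Pp_succ_left, mul_assoc, ih, ← mul_assoc, hLax, mul_assoc,
        Pp_succ_left]
      have h1 : t - (k : ℤ) * (M : ℤ) - (M : ℤ) = t - ((k : ℤ) + 1) * (M : ℤ) := by ring
      have h2 : t - (k : ℤ) * (M : ℤ) - (K : ℤ) = t - (K : ℤ) - (k : ℤ) * (M : ℤ) := by ring
      rw [h1, h2]
      push_cast
      ring_nf

include hLax in
/-- push one `L` rightwards-to-left through a block of `m` `R`'s -/
lemma swapL : ∀ (m : ℕ) (t : ℤ),
    Qp K R m t * L (t + (M : ℤ) - (m : ℤ) * (K : ℤ)) =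
      L (t + (M : ℤ)) * Qp K R m (t + (M : ℤ)) := by
  intro m
  induction m with
  | zero => intro t; simp [Qp_zero]
  | succ m ih =>
      intro t
      rw [Qp_succ_right, mul_assoc]
      have key : R (t - (m : ℤ) * (K : ℤ)) * L (t + (M : ℤ) - ((m : ℕ) + 1 : ℤ) * (K : ℤ)) =
          L (t + (M : ℤ) - (m : ℤ) * (K : ℤ)) * R (t + (M : ℤ) - (m : ℤ) * (K : ℤ)) := by
        have := (hLax (t - (m : ℤ) * (K : ℤ) + (M : ℤ))).symm
        have e1 : t - (m : ℤ) * (K : ℤ) + (M : ℤ) - (M : ℤ) = t - (m : ℤ) * (K : ℤ) := by ring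
        have e2 : t - (m : ℤ) * (K : ℤ) + (M : ℤ) - (K : ℤ)
            = t + (M : ℤ) - ((m : ℕ) + 1 : ℤ) * (K : ℤ) := by push_cast; ring
        have e3 : t - (m : ℤ) * (K : ℤ) + (M : ℤ) = t + (M : ℤ) - (m : ℤ) * (K : ℤ) := by ring
        rw [e1, e2, e3] at this
        exact this
      have e4 : (((m + 1 : ℕ) : ℤ)) * (K : ℤ) = ((m : ℕ) + 1 : ℤ) * (K : ℤ) := by push_cast; ring
      rw [e4, key, ← mul_assoc, ih, mul_assoc, ← Qp_succ_right]

end Swap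


section Steps

variable {N : ℕ} (m k : ℕ) (L R : ℤ → Matrix (Fin N) (Fin N) ℂ)
variable (hLax : ∀ s : ℤ, L s * R s = R (s - ((m + 1 : ℕ) : ℤ)) * L (s - ((k + 1 : ℕ) : ℤ)))

include hLax in
lemma stepM (t : ℤ) :
    (Pp (m + 1) L (k + 1) t * Qp (k + 1) R (m + 1) t).charpoly
      = (Pp (m + 1) L (k + 1) (t + ((m + 1 : ℕ) : ℤ)) *
          Qp (k + 1) R (m + 1) (t + ((m + 1 : ℕ) : ℤ))).charpoly := by
  set Mz : ℤ := ((m + 1 : ℕ) : ℤ) with hMzdef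
  set Kz : ℤ := ((k + 1 : ℕ) : ℤ) with hKzdef
  have e : t - (k : ℤ) * Mz = t + Mz - ((m + 1 : ℕ) : ℤ) * Kz := by
    rw [hMzdef, hKzdef]; push_cast; ring
  have e2 : t + Mz - Mz = t := by ring
  calc (Pp (m + 1) L (k + 1) t * Qp (k + 1) R (m + 1) t).charpoly
      = (Qp (k + 1) R (m + 1) t * Pp (m + 1) L (k + 1) t).charpoly :=
        charpoly_mul_comm' _ _
    _ = (Qp (k + 1) R (m + 1) t * (L (t + Mz - ((m + 1 : ℕ) : ℤ) * Kz) *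
          Pp (m + 1) L k t)).charpoly := by
        rw [Pp_succ_left, e]
    _ = (L (t + Mz) * (Qp (k + 1) R (m + 1) (t + Mz) * Pp (m + 1) L k t)).charpoly := by
        rw [← mul_assoc, swapL (m + 1) (k + 1) L R hLax (m + 1) t, mul_assoc]
    _ = ((Qp (k + 1) R (m + 1) (t + Mz) * Pp (m + 1) L k t) * L (t + Mz)).charpoly :=
        charpoly_mul_comm' _ _
    _ = (Qp (k + 1) R (m + 1) (t + Mz) * Pp (m + 1) L (k + 1) (t + Mz)).charpoly := by
        rw [Pp_succ_right (m + 1) L k (t + Mz), e2, mul_assoc]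
    _ = (Pp (m + 1) L (k + 1) (t + Mz) * Qp (k + 1) R (m + 1) (t + Mz)).charpoly :=
        charpoly_mul_comm' _ _

include hLax in
lemma stepK (t : ℤ) :
    (Pp (m + 1) L (k + 1) t * Qp (k + 1) R (m + 1) t).charpoly
      = (Pp (m + 1) L (k + 1) (t - ((k + 1 : ℕ) : ℤ)) *
          Qp (k + 1) R (m + 1) (t - ((k + 1 : ℕ) : ℤ))).charpoly := by
  set Mz : ℤ := ((m + 1 : ℕ) : ℤ) with hMzdef
  set Kz : ℤ := ((k + 1 : ℕ) : ℤ) with hKzdef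
  have e : t - ((k + 1 : ℕ) : ℤ) * Mz = t - Kz - (m : ℤ) * Kz := by
    rw [hMzdef, hKzdef]; push_cast; ring
  calc (Pp (m + 1) L (k + 1) t * Qp (k + 1) R (m + 1) t).charpoly
      = ((Pp (m + 1) L (k + 1) t * R t) * Qp (k + 1) R m (t - Kz)).charpoly := by
        rw [Qp_succ_left, ← mul_assoc]
    _ = ((R (t - ((k + 1 : ℕ) : ℤ) * Mz) * Pp (m + 1) L (k + 1) (t - Kz)) *
          Qp (k + 1) R m (t - Kz)).charpoly := by
        rw [swapR (m + 1) (k + 1) L R hLax (k + 1) t]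
    _ = ((Pp (m + 1) L (k + 1) (t - Kz) * Qp (k + 1) R m (t - Kz)) *
          R (t - ((k + 1 : ℕ) : ℤ) * Mz)).charpoly := by
        rw [mul_assoc]
        exact charpoly_mul_comm' _ _
    _ = (Pp (m + 1) L (k + 1) (t - Kz) * Qp (k + 1) R (m + 1) (t - Kz)).charpoly := by
        rw [mul_assoc, e, ← Qp_succ_right]

end Steps

lemma periodic_shift {α : Type*} (f : ℤ → α) (c : ℤ) (h : ∀ t, f t = f (t + c)) :
    ∀ (z : ℤ) (t : ℤ), f (t + z * c) = f t := by
  intro z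
  induction z using Int.induction_on with
  | zero => simp
  | succ i ih =>
      intro t
      have e : t + ((i : ℤ) + 1) * c = (t + (i : ℤ) * c) + c := by ring
      rw [e, ← h (t + (i : ℤ) * c)]
      exact ih t
  | pred i ih =>
      intro t
      have e : t + (-(i : ℤ) - 1) * c + c = t + (-(i : ℤ)) * c := by ring
      rw [h (t + (-(i : ℤ) - 1) * c), e]
      exact ih t

/-- Under the periodic Lax equations and `gcd(M,K)=1`, the characteristic
polynomial of `X_t(y)` does not depend on `t`. -/
theorem charpoly_time_invariant (M K N : ℕ) (hM : 0 < M) (hK : 0 < K)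
    (hMK : Nat.Coprime M K) (hN : 2 ≤ N)
    (I V : ℤ → ℤ → ℂ)
    (hIper : ∀ n t : ℤ, I (n + N) t = I n t)
    (hVper : ∀ n t : ℤ, V (n + N) t = V n t)
    (hLax : ∀ (s : ℤ) (y : ℂ),
      bandM N (fun n => V n s) y * bandM N (fun n => I n s) y =
        bandM N (fun n => I n (s - M)) y * bandM N (fun n => V n (s - K)) y) :
    ∀ (t : ℤ) (y : ℂ),
      (XmatM M K N I V t y).charpoly = (XmatM M K N I V (t + 1) y).charpoly := by
  obtain ⟨m, rfl⟩ : ∃ m, M = m + 1 := ⟨M - 1, (Nat.succ_pred_eq_of_pos hM).symm⟩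
  obtain ⟨k, rfl⟩ : ∃ k, K = k + 1 := ⟨K - 1, (Nat.succ_pred_eq_of_pos hK).symm⟩
  intro t y
  set L : ℤ → Matrix (Fin N) (Fin N) ℂ := fun s => bandM N (fun n => V n s) y with hL
  set R : ℤ → Matrix (Fin N) (Fin N) ℂ := fun s => bandM N (fun n => I n s) y with hR
  have hlax : ∀ s : ℤ, L s * R s = R (s - ((m + 1 : ℕ) : ℤ)) * L (s - ((k + 1 : ℕ) : ℤ)) :=
    fun s => hLax s y
  have hX : ∀ u : ℤ, XmatM (m + 1) (k + 1) N I V u y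
      = Pp (m + 1) L (k + 1) u * Qp (k + 1) R (m + 1) u := fun u => rfl
  set f : ℤ → Polynomial ℂ := fun u => (XmatM (m + 1) (k + 1) N I V u y).charpoly with hf
  have hfM : ∀ u : ℤ, f u = f (u + ((m + 1 : ℕ) : ℤ)) := by
    intro u
    simp only [hf, hX]
    exact stepM m k L R hlax u
  have hfK : ∀ u : ℤ, f u = f (u + (-((k + 1 : ℕ) : ℤ))) := by
    intro u
    simp only [hf, hX]
    have := stepK m k L R hlax u
    rw [this]
    congr 2 <;> ring
  have pM := periodic_shift f ((m + 1 : ℕ) : ℤ) hfM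
  have pK := periodic_shift f (-((k + 1 : ℕ) : ℤ)) hfK
  -- Bezout
  set a : ℤ := Int.gcdA ((m + 1 : ℕ) : ℤ) ((k + 1 : ℕ) : ℤ) with ha
  set b : ℤ := Int.gcdB ((m + 1 : ℕ) : ℤ) ((k + 1 : ℕ) : ℤ) with hb
  have hbez : (1 : ℤ) = ((m + 1 : ℕ) : ℤ) * a + ((k + 1 : ℕ) : ℤ) * b := by
    have := Int.gcd_eq_gcd_ab ((m + 1 : ℕ) : ℤ) ((k + 1 : ℕ) : ℤ)
    rwa [Int.gcd_natCast_natCast, hMK] at this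
  have key : f t = f (t + 1) := by
    have e : t + 1 = (t + (-b) * (-((k + 1 : ℕ) : ℤ))) + a * ((m + 1 : ℕ) : ℤ) := by
      rw [hbez]; ring
    rw [e, pM, pK]
  exact key
end

section
/- Let L be a positive integer, let I_1, …, I_L ∈ ℂ and E_1, …, E_L ∈ ℂ, and let R* be the L×L complex matrix with (k,k) entry I_k for k = 1,…,L−1, (k,k+1) entry 1 for k = 1,…,L−1, last row (E_1, E_2, …, E_{L−1}, I_L + E_L), and all other entries 0. Set z_0 := 1 and z_n := I_1 I_2 ⋯ I_n for 1 ≤ n ≤ L. Then det R* = (−1)^{L+1} · ( ∑_{k=1}^{L} (−1)^{k+1} E_k z_{k−1} + (−1)^{L+1} z_L ), i.e. det R* = (−1)^{L+1}( E_1 − E_2 z_1 + E_3 z_2 − ⋯ + (−1)^{L+1} E_L z_{L−1} + (−1)^{L+1} z_L ). -/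
/-- The `L×L` matrix (2.16): diagonal entries `I 1, …, I (L-1)` in the first `L-1` rows,
entries `1` on the superdiagonal, last row `(E 1, …, E (L-1), I L + E L)`,
and `0` elsewhere. -/
def RstarM (L : ℕ) (I E : ℕ → ℂ) : Matrix (Fin L) (Fin L) ℂ :=
  Matrix.of fun i j =>
    if (i : ℕ) = L - 1 then
      (if (j : ℕ) = L - 1 then I L + E L else E ((j : ℕ) + 1))
    else if i = j then I ((i : ℕ) + 1)
    else if (i : ℕ) + 1 = (j : ℕ) then 1 else 0

lemma Rstar_aux : ∀ (n : ℕ) (I E : ℕ → ℂ),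
    (RstarM (n + 1) I E).det =
      (-1 : ℂ) ^ (n + 2) *
        ((∑ k ∈ Finset.range (n + 1),
            (-1 : ℂ) ^ k * E (k + 1) * ∏ j ∈ Finset.range k, I (j + 1)) +
          (-1 : ℂ) ^ (n + 2) * ∏ j ∈ Finset.range (n + 1), I (j + 1)) := by
  intro n
  induction n with
  | zero =>
      intro I E
      rw [Matrix.det_fin_one]
      simp [RstarM]
      ring
  | succ n ih =>
      intro I E
      rw [Matrix.det_succ_column_zero]
      -- the first-column entries vanish except at 0 and last
      have hzero : ∀ i : Fin (n + 2), i ∉ ({0, Fin.last (n + 1)} : Finset (Fin (n+2))) →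
          (-1 : ℂ) ^ (i : ℕ) * RstarM (n + 2) I E i 0 *
            ((RstarM (n + 2) I E).submatrix i.succAbove Fin.succ).det = 0 := by
        intro i hi
        simp only [Finset.mem_insert, Finset.mem_singleton] at hi
        push_neg at hi
        obtain ⟨h0, hl⟩ := hi
        have h0' : (i : ℕ) ≠ 0 := fun h => h0 (Fin.ext h)
        have hl' : (i : ℕ) ≠ n + 1 := fun h => hl (Fin.ext h)
        have : RstarM (n + 2) I E i 0 = 0 := by
          simp only [RstarM, Matrix.of_apply, Fin.val_zero]
          rw [if_neg (by omega)]
          rw [if_neg (by intro h; exact h0 (by simpa using h.symm ▸ rfl))]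
          exact if_neg (by omega)
        rw [this]; ring
      have hsum := Finset.sum_subset (Finset.subset_univ ({0, Fin.last (n+1)} : Finset (Fin (n+2))))
        (fun i _ hi => hzero i hi)
      rw [← hsum, Finset.sum_pair (by exact fun h => by simpa using congrArg Fin.val h : (0 : Fin (n+2)) ≠ Fin.last (n+1))]
      -- minor at (0,0)
      have hsub0 : (RstarM (n + 2) I E).submatrix (0 : Fin (n+2)).succAbove Fin.succ
          = RstarM (n + 1) (fun m => I (m + 1)) (fun m => E (m + 1)) := by
        ext i j
        simp only [Matrix.submatrix_apply, Fin.succAbove_zero, RstarM, Matrix.of_apply,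
          Fin.val_succ]
        have h1 : ((i : ℕ) + 1 = n + 2 - 1) ↔ ((i : ℕ) = n + 1 - 1) := by omega
        have h2 : ((j : ℕ) + 1 = n + 2 - 1) ↔ ((j : ℕ) = n + 1 - 1) := by omega
        have h3 : (i.succ = j.succ) ↔ (i = j) := by
          constructor
          · exact fun h => Fin.succ_injective _ h
          · exact fun h => h ▸ rfl
        split_ifs with a b c d e f g <;>
          first
          | rfl
          | (exfalso; omega)
      -- minor at (last, 0) is lower triangular with diagonal 1
      have hsubL : ((RstarM (n + 2) I E).submatrix (Fin.last (n+1)).succAbove Fin.succ).det = 1 := by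
        have htri : ∀ (i j : Fin (n+1)), i < j →
            (RstarM (n + 2) I E).submatrix (Fin.last (n+1)).succAbove Fin.succ i j = 0 := by
          intro i j hij
          simp only [Matrix.submatrix_apply, Fin.succAbove_last, RstarM, Matrix.of_apply,
            Fin.coe_castSucc, Fin.val_succ]
          have : (i : ℕ) < (j : ℕ) := hij
          rw [if_neg (by omega), if_neg ?_, if_neg (by omega)]
          intro h
          have := congrArg Fin.val h
          simp at this
          omega
        rw [Matrix.det_of_lowerTriangular _ htri]
        apply Finset.prod_eq_one
        intro i _
        simp only [Matrix.submatrix_apply, Fin.succAbove_last, RstarM, Matrix.of_apply,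
          Fin.coe_castSucc, Fin.val_succ]
        rw [if_neg (by omega), if_neg ?_]
        · simp
        · intro h
          have := congrArg Fin.val h
          simp at this
      -- entries
      have e0 : RstarM (n + 2) I E 0 0 = I 1 := by
        simp only [RstarM, Matrix.of_apply, Fin.val_zero]
        rw [if_neg (by omega)]
        simp
      have eL : RstarM (n + 2) I E (Fin.last (n+1)) 0 = E 1 := by
        simp only [RstarM, Matrix.of_apply, Fin.val_zero, Fin.val_last]
        rw [if_pos (by omega)]
        exact if_neg (by omega)
      rw [hsub0, hsubL, e0, eL, ih]
      simp only [Fin.val_zero, Fin.val_last, pow_zero]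
      -- now pure algebra
      set A := ∑ k ∈ Finset.range (n + 1),
          (-1 : ℂ) ^ k * E (k + 2) * ∏ j ∈ Finset.range k, I (j + 2) with hA
      set B := ∏ j ∈ Finset.range (n + 1), I (j + 2) with hB
      have hprod : ∀ k, (∏ j ∈ Finset.range (k + 1), I (j + 1))
          = (∏ j ∈ Finset.range k, I (j + 2)) * I 1 := by
        intro k
        rw [Finset.prod_range_succ']
      have hsum2 : (∑ k ∈ Finset.range (n + 2),
          (-1 : ℂ) ^ k * E (k + 1) * ∏ j ∈ Finset.range k, I (j + 1))
          = (-(I 1)) * A + E 1 := by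
        rw [Finset.sum_range_succ']
        congr 1
        · rw [hA, Finset.mul_sum]
          apply Finset.sum_congr rfl
          intro k _
          rw [hprod k]
          ring
        · simp
      rw [hsum2, hprod (n + 1)]
      ring
  
/-- the cofactor expansion of `det R*` along the last row:
`det R* = (-1)^{L+1} (E_1 - E_2 z_1 + E_3 z_2 - ⋯ + (-1)^{L+1} E_L z_{L-1}
+ (-1)^{L+1} z_L)` with `z_n = I_1 ⋯ I_n`, `z_0 = 1`. -/
theorem det_Rstar_cofactor (L : ℕ) (hL : 0 < L) (I E : ℕ → ℂ)
    (z : ℕ → ℂ) (hz : ∀ n : ℕ, z n = ∏ k ∈ Finset.range n, I (k + 1)) :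
    (RstarM L I E).det =
      (-1 : ℂ) ^ (L + 1) *
        ((∑ k ∈ Finset.range L, (-1 : ℂ) ^ k * E (k + 1) * z k) +
          (-1 : ℂ) ^ (L + 1) * z L) := by
  obtain ⟨n, rfl⟩ := Nat.exists_eq_succ_of_ne_zero hL.ne'
  simp only [hz]
  exact Rstar_aux n I E
end

section
/- Let L be a positive integer, let x ∈ ℂ, let I_1, …, I_L ∈ ℂ, and let w_0, w_1, …, w_{L−1} ∈ ℂ with w_{L−1} = 1. Define E_1 := x − w_0 I_1 and E_{k+1} := −( w_{k−1} + w_k I_{k+1} ) for k = 1, …, L−1. Let R* be the L×L complex matrix with (k,k) entry I_k for k = 1,…,L−1, (k,k+1) entry 1 for k = 1,…,L−1, last row (E_1, E_2, …, E_{L−1}, I_L + E_L), and all other entries 0. Then det R* = (−1)^{L+1} x. -/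
private lemma aux_det (n : ℕ) : ∀ (x : ℂ) (I w E : ℕ → ℂ),
    w n = 1 → E 1 = x - w 0 * I 1 →
    (∀ k : ℕ, 1 ≤ k → k ≤ n → E (k + 1) = -(w (k - 1) + w k * I (k + 1))) →
    (RstarM (n + 1) I E).det = (-1 : ℂ) ^ n * x := by
  induction n with
  | zero =>
    intro x I w E hw hE1 _
    rw [show (RstarM 1 I E).det = RstarM 1 I E 0 0 from Matrix.det_fin_one _]
    simp [RstarM, hE1, hw]
  | succ n ih =>
    intro x I w E hw hE1 hEk
    rw [Matrix.det_succ_column_zero]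
    rw [Finset.sum_eq_add_of_mem (0 : Fin (n+2)) (Fin.last (n+1))
      (Finset.mem_univ _) (Finset.mem_univ _)
      (by simp [Fin.ext_iff])
      (by
        intro c _ ⟨hc0, hcl⟩
        have h1 : (c : ℕ) ≠ 0 := fun h => hc0 (Fin.ext h)
        have h2 : (c : ℕ) ≠ n + 1 := fun h => hcl (Fin.ext h)
        have : RstarM (n+2) I E c 0 = 0 := by
          simp only [RstarM, Matrix.of_apply]
          rw [if_neg (by omega), if_neg (fun h => h1 (by rw [h]; rfl)),
            if_neg (by simp)]
        simp [this])]
    have e0 : RstarM (n+2) I E 0 0 = I 1 := by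
      simp only [RstarM, Matrix.of_apply, Fin.val_zero]
      rw [if_neg (by omega)]
      simp
    have el : RstarM (n+2) I E (Fin.last (n+1)) 0 = E 1 := by
      simp only [RstarM, Matrix.of_apply, Fin.val_last, Fin.val_zero]
      rw [if_pos (by omega)]
      simp
    -- minor 1 : delete row 0 and column 0
    have hm1 : (RstarM (n+2) I E).submatrix (Fin.succAbove 0) Fin.succ
        = RstarM (n+1) (fun m => I (m+1)) (fun m => E (m+1)) := by
      ext i j
      simp only [Matrix.submatrix_apply, Fin.succAbove_zero, RstarM, Matrix.of_apply,
        Fin.val_succ, Fin.succ_inj]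
      have h1 : ((i : ℕ) + 1 = n + 2 - 1) ↔ ((i : ℕ) = n + 1 - 1) := by omega
      have h2 : ((j : ℕ) + 1 = n + 2 - 1) ↔ ((j : ℕ) = n + 1 - 1) := by omega
      have h3 : ((i : ℕ) + 1 + 1 = (j : ℕ) + 1) ↔ ((i : ℕ) + 1 = (j : ℕ)) := by omega
      simp only [h1, h2, h3]
    -- minor 2 : delete last row and column 0; lower triangular with 1s on diagonal
    have hm2 : ((RstarM (n+2) I E).submatrix (Fin.succAbove (Fin.last (n+1))) Fin.succ).det
        = 1 := by
      rw [Matrix.det_of_lowerTriangular]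
      · apply Finset.prod_eq_one
        intro i _
        simp only [Matrix.submatrix_apply, Fin.succAbove_last, RstarM, Matrix.of_apply,
          Fin.coe_castSucc, Fin.val_succ]
        rw [if_neg (by omega), if_neg (by
            intro h
            have : (i : ℕ) = (i : ℕ) + 1 := by
              simpa [Fin.ext_iff] using h
            omega)]
        simp
      · intro i j hij
        simp only [Matrix.BlockTriangular, OrderDual.toDual_lt_toDual] at hij ⊢
        simp only [Matrix.submatrix_apply, Fin.succAbove_last, RstarM, Matrix.of_apply,
          Fin.coe_castSucc, Fin.val_succ]
        have hij' : (i : ℕ) < (j : ℕ) := hij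
        rw [if_neg (by omega), if_neg (by
            intro h
            have : (i : ℕ) = (j : ℕ) + 1 := by simpa [Fin.ext_iff] using h
            omega), if_neg (by omega)]
    have hIH : (RstarM (n+1) (fun m => I (m+1)) (fun m => E (m+1))).det
        = (-1 : ℂ) ^ n * (-(w 0)) := by
      apply ih (-(w 0)) (fun m => I (m+1)) (fun m => w (m+1)) (fun m => E (m+1))
      · exact hw
      · have := hEk 1 le_rfl (by omega)
        simp only [Nat.sub_self] at this ⊢
        rw [this]; ring
      · intro k hk1 hkn
        have h := hEk (k+1) (by omega) (by omega)
        have h2 : k - 1 + 1 = k := by omega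
        simp only [h2]
        exact h
    rw [e0, el, hm1, hm2, hIH]
    rw [hE1]
    simp only [Fin.val_zero, Fin.val_last, pow_zero]
    ring

/-- second part of Lemma 2.8: with `E_1 = x - w_0 I_1`,
`E_{k+1} = -(w_{k-1} + w_k I_{k+1})` for `1 ≤ k ≤ L-1`, and `w_{L-1} = 1`,
the determinant telescopes: `det R* = (-1)^{L+1} x`. -/
theorem det_Rstar_eq (L : ℕ) (hL : 0 < L) (x : ℂ) (I w E : ℕ → ℂ)
    (hw : w (L - 1) = 1)
    (hE1 : E 1 = x - w 0 * I 1)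
    (hEk : ∀ k : ℕ, 1 ≤ k → k ≤ L - 1 → E (k + 1) = -(w (k - 1) + w k * I (k + 1))) :
    (RstarM L I E).det = (-1 : ℂ) ^ (L + 1) * x := by
  obtain ⟨n, rfl⟩ : ∃ n, L = n + 1 := ⟨L - 1, by omega⟩
  rw [aux_det n x I w E (by simpa using hw) hE1 (by simpa using hEk)]
  rw [show n + 1 + 1 = n + 2 from rfl, pow_add]
  ring
end

section
/- Let L be a positive integer and let ξ_1, …, ξ_L : ℤ → ℂ, and let B be the bracket on nonempty words over {s,m} defined recursively by B([s], i) := 1, B([m], i) := ξ_1(i), B(s·χ, i) := B(χ, i+1), and B(m·χ, i) := ξ_l(i)·B(χ, i) for χ of length l−1 ≥ 1, where l is the length of the new word and letters are prepended on the left. Then for every word χ of length l with 1 ≤ l ≤ L−1 containing exactly k letters 's', and every i ∈ ℤ, one has B(χ·m, i) = B(χ·s, i) · ξ_1(i+k), where χ·m and χ·s denote the words obtained by appending the letter m (resp. s) on the right of χ. -/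
/-- Lemma A.2: for a word `χ` of length `l` with `1 ≤ l ≤ L-1`
containing exactly `k` letters `s` (encoded `true`; `m` is encoded `false`),
appending a letter on the right satisfies `B(χm, i) = B(χs, i) · ξ_1(i + k)`. -/
theorem bracket_append_identity (L : ℕ) (ξ : ℕ → ℤ → ℂ)
    (B : List Bool → ℤ → ℂ)
    (hBs : ∀ i : ℤ, B [true] i = 1)
    (hBm : ∀ i : ℤ, B [false] i = ξ 1 i)
    (hBsw : ∀ (χ : List Bool) (i : ℤ), χ ≠ [] → B (true :: χ) i = B χ (i + 1))
    (hBmw : ∀ (χ : List Bool) (i : ℤ), χ ≠ [] →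
      B (false :: χ) i = ξ (χ.length + 1) i * B χ i) :
    ∀ (χ : List Bool) (i : ℤ), 1 ≤ χ.length → χ.length ≤ L - 1 →
      B (χ ++ [false]) i = B (χ ++ [true]) i * ξ 1 (i + (χ.count true : ℤ)) := by
  have key : ∀ (χ : List Bool), χ ≠ [] → ∀ i : ℤ,
      B (χ ++ [false]) i = B (χ ++ [true]) i * ξ 1 (i + (χ.count true : ℤ)) := by
    intro χ
    induction χ with
    | nil => intro h; exact absurd rfl h
    | cons b χ ih =>
      intro _ i
      cases χ with
      | nil =>
        cases b with
        | false =>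
          simp only [List.cons_append, List.nil_append]
          rw [hBmw [false] i (by simp), hBmw [true] i (by simp), hBs, hBm]
          simp [mul_assoc]
        | true =>
          simp only [List.cons_append, List.nil_append]
          rw [hBsw [false] i (by simp), hBsw [true] i (by simp), hBs, hBm]
          simp
      | cons c χ' =>
        have hne : (c :: χ') ≠ [] := by simp
        have ih' := ih hne
        simp only [List.cons_append] at ih'
        cases b with
        | false =>
          simp only [List.cons_append]
          rw [hBmw (c :: (χ' ++ [false])) i (by simp),
            hBmw (c :: (χ' ++ [true])) i (by simp), ih' i]
          simp only [List.count_cons, List.length_cons, List.length_append,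
            List.length_nil]
          norm_num
          ring
        | true =>
          simp only [List.cons_append]
          rw [hBsw (c :: (χ' ++ [false])) i (by simp),
            hBsw (c :: (χ' ++ [true])) i (by simp), ih' (i + 1)]
          simp only [List.count_cons]
          push_cast
          simp only [beq_self_eq_true, if_true]
          split_ifs <;> ring_nf
  intro χ i h1 _
  exact key χ (by intro h; simp [h] at h1) i
end

section
/- Let M, K, N be positive integers and let I, V : ℤ × ℤ → ℂ (written I_n^t, V_n^t) satisfy the periodicity I_{n+N}^t = I_n^t, V_{n+N}^t = V_n^t and equation (kdv1): I_n^t = I_{n−1}^{t−M} + V_n^{t−K} − V_{n−1}^t for all n,t ∈ ℤ. Then for every t ∈ ℤ, ∑_{n=1}^{N} I_n^t + ∑_{n=1}^{N} V_n^t = ∑_{n=1}^{N} I_n^{t−M} + ∑_{n=1}^{N} V_n^{t−K}. In particular, when M = K = 1 and N = 2, the quantity I_1^t + I_2^t + V_1^t + V_2^t is independent of t (the hidden conserved quantity of the case M = K = 1, N = 2). -/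
lemma shift_sum (N : ℕ) (f : ℤ → ℂ) (hf : f ((0:ℤ) + N) = f 0) :
    ∑ n ∈ Finset.range N, f ((n : ℤ) + 1) = ∑ n ∈ Finset.range N, f (n : ℤ) := by
  have h1 : ∑ i ∈ Finset.range (N + 1), f (i : ℤ)
      = ∑ i ∈ Finset.range N, f ((i : ℤ) + 1) + f 0 := by
    rw [Finset.sum_range_succ']
    norm_num
  have h2 : ∑ i ∈ Finset.range (N + 1), f (i : ℤ)
      = ∑ i ∈ Finset.range N, f (i : ℤ) + f (N : ℤ) := Finset.sum_range_succ _ _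
  have h3 : f (N : ℤ) = f 0 := by simpa using hf
  rw [h2, h3] at h1
  linear_combination -h1

/-- summing (kdv1) over a period gives
`∑ I_n^t + ∑ V_n^t = ∑ I_n^{t-M} + ∑ V_n^{t-K}`; in particular for `M = K = 1`, `N = 2`
the quantity `I_1^t + I_2^t + V_1^t + V_2^t` is independent of `t`. -/
theorem hidden_conserved_quantity (M K N : ℕ) (hM : 0 < M) (hK : 0 < K) (hN : 0 < N)
    (I V : ℤ → ℤ → ℂ)
    (hIper : ∀ n t : ℤ, I (n + N) t = I n t)
    (hVper : ∀ n t : ℤ, V (n + N) t = V n t)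
    (hkdv1 : ∀ n t : ℤ, I n t = I (n - 1) (t - M) + V n (t - K) - V (n - 1) t) :
    (∀ t : ℤ,
      (∑ n ∈ Finset.range N, I ((n : ℤ) + 1) t) +
        (∑ n ∈ Finset.range N, V ((n : ℤ) + 1) t) =
      (∑ n ∈ Finset.range N, I ((n : ℤ) + 1) (t - M)) +
        (∑ n ∈ Finset.range N, V ((n : ℤ) + 1) (t - K))) ∧
    (M = 1 → K = 1 → N = 2 →
      ∀ t : ℤ, I 1 t + I 2 t + V 1 t + V 2 t = I 1 0 + I 2 0 + V 1 0 + V 2 0) := by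
  have main : ∀ t : ℤ,
      (∑ n ∈ Finset.range N, I ((n : ℤ) + 1) t) +
        (∑ n ∈ Finset.range N, V ((n : ℤ) + 1) t) =
      (∑ n ∈ Finset.range N, I ((n : ℤ) + 1) (t - M)) +
        (∑ n ∈ Finset.range N, V ((n : ℤ) + 1) (t - K)) := by
    intro t
    have hsum : ∑ n ∈ Finset.range N, I ((n : ℤ) + 1) t
        = ∑ n ∈ Finset.range N,
          (I ((n : ℤ)) (t - M) + V ((n : ℤ) + 1) (t - K) - V ((n : ℤ)) t) := by
      apply Finset.sum_congr rfl
      intro n _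
      have := hkdv1 ((n : ℤ) + 1) t
      simpa using this
    rw [Finset.sum_sub_distrib, Finset.sum_add_distrib] at hsum
    have hI : ∑ n ∈ Finset.range N, I ((n : ℤ) + 1) (t - M)
        = ∑ n ∈ Finset.range N, I (n : ℤ) (t - M) :=
      shift_sum N (fun n => I n (t - M)) (hIper 0 (t - M))
    have hV : ∑ n ∈ Finset.range N, V ((n : ℤ) + 1) t
        = ∑ n ∈ Finset.range N, V (n : ℤ) t :=
      shift_sum N (fun n => V n t) (hVper 0 t)
    rw [hI, hV]
    linear_combination hsum
  refine ⟨main, ?_⟩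
  intro hM1 hK1 hN2 t
  subst hM1 hK1 hN2
  have key : ∀ s : ℤ, I 1 s + I 2 s + V 1 s + V 2 s
      = I 1 (s - 1) + I 2 (s - 1) + V 1 (s - 1) + V 2 (s - 1) := by
    intro s
    have := main s
    simp [Finset.sum_range_succ] at this
    linear_combination this
  have gen : ∀ s : ℤ, I 1 s + I 2 s + V 1 s + V 2 s = I 1 0 + I 2 0 + V 1 0 + V 2 0 := by
    intro s
    induction s using Int.induction_on with
    | zero => rfl
    | succ k ih =>
      have h := key ((k : ℤ) + 1)
      simp only [add_sub_cancel_right] at h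
      exact h.trans ih
    | pred k ih =>
      have := key (-(k : ℤ))
      rw [this] at ih
      have h2 : (-(k:ℤ) - 1) = (-(k:ℤ) - 1) := rfl
      simpa [sub_eq_add_neg, add_comm] using ih
  exact gen t
end

section
/- Let M, K, N be positive integers with gcd(M,K) = 1 and N ≥ 2, and let I, V : ℤ × ℤ → ℂ (written I_n^t, V_n^t) satisfy the periodicity I_{n+N}^t = I_n^t, V_{n+N}^t = V_n^t and the Lax equations L_s(y) R_s(y) = R_{s−M}(y) L_{s−K}(y) for all s ∈ ℤ and all y ∈ ℂ. Then for every t ∈ ℤ the multiset of M+K complex numbers { ∏_{n=1}^{N} V_n^{t−jM} : 0 ≤ j ≤ K−1 } ∪ { ∏_{n=1}^{N} I_n^{t−jK} : 0 ≤ j ≤ M−1 } (counted with multiplicities) is equal to the corresponding multiset with t replaced by t+1; i.e. this multiset is invariant under the time evolution. -/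
/-- The multiset `{ ∏_n V_n^{t-jM} : 0 ≤ j ≤ K-1 } ∪ { ∏_n I_n^{t-jK} : 0 ≤ j ≤ M-1 }`
of `M + K` complex numbers, counted with multiplicities. -/
noncomputable def specMultiset (M K N : ℕ) (I V : ℤ → ℤ → ℂ) (t : ℤ) : Multiset ℂ :=
  ((Multiset.range K).map fun j =>
      ∏ n ∈ Finset.range N, V ((n : ℤ) + 1) (t - (j : ℤ) * (M : ℤ))) +
  ((Multiset.range M).map fun j =>
      ∏ n ∈ Finset.range N, I ((n : ℤ) + 1) (t - (j : ℤ) * (K : ℤ)))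

lemma det_bandM (n : ℕ) (d : ℤ → ℂ) (y : ℂ) :
    (bandM (n+2) d y).det
      = (∏ i ∈ Finset.range (n+2), d ((i : ℤ) + 1)) + (-1)^(n+1) * y := by
  rw [Matrix.det_succ_column_zero]
  have hcol : ∀ i : Fin (n+2), i ≠ 0 → i ≠ Fin.last (n+1) → bandM (n+2) d y i 0 = 0 := by
    intro i h0 hl
    have h2 : ¬ ((i : ℕ) = n + 1) := fun h => hl (Fin.ext (by simp only [Fin.val_last]; omega))
    simp [bandM, h0, h2]
  have hsub : (Finset.univ : Finset (Fin (n+2))).sum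
      (fun i => (-1)^(i:ℕ) * bandM (n+2) d y i 0 *
        ((bandM (n+2) d y).submatrix i.succAbove Fin.succ).det)
      = ({0, Fin.last (n+1)} : Finset (Fin (n+2))).sum
      (fun i => (-1)^(i:ℕ) * bandM (n+2) d y i 0 *
        ((bandM (n+2) d y).submatrix i.succAbove Fin.succ).det) := by
    refine (Finset.sum_subset (Finset.subset_univ _) ?_).symm
    intro x _ hx
    simp only [Finset.mem_insert, Finset.mem_singleton, not_or] at hx
    rw [hcol x hx.1 hx.2]; ring
  rw [hsub, Finset.sum_pair (by
    intro h
    have := congrArg Fin.val h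
    simp [Fin.val_last] at this :
    (0 : Fin (n+2)) ≠ Fin.last (n+1))]
  have e0 : bandM (n+2) d y 0 0 = d 1 := by simp [bandM]
  have el : bandM (n+2) d y (Fin.last (n+1)) 0 = y := by
    have h1 : Fin.last (n+1) ≠ 0 := by intro h; have := congrArg Fin.val h; simp at this
    have h2 : ¬ ((Fin.last (n+1) : ℕ) + 1 = ((0 : Fin (n+2)) : ℕ)) := by
      simp only [Fin.val_last, Fin.val_zero]; omega
    have h3 : (Fin.last (n+1) : ℕ) = n + 2 - 1 ∧ ((0 : Fin (n+2)) : ℕ) = 0 :=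
      ⟨by simp only [Fin.val_last]; omega, rfl⟩
    simp only [bandM, Matrix.of_apply]
    rw [if_neg h1, if_neg h2, if_pos h3]; ring
  have m0 : ((bandM (n+2) d y).submatrix (Fin.succAbove 0) Fin.succ).det
      = ∏ i : Fin (n+1), d ((i : ℕ) + 2 : ℕ) := by
    have htri : ((bandM (n+2) d y).submatrix (Fin.succAbove 0) Fin.succ).BlockTriangular id := by
      intro i j hij
      simp only [id_eq] at hij
      simp only [Matrix.submatrix_apply, Fin.succAbove_zero, bandM, Matrix.of_apply]
      rw [if_neg (by simpa [Fin.succ_inj] using hij.ne'),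
        if_neg (by simp only [Fin.val_succ]; omega),
        if_neg (by simp [Fin.val_succ])]
      ring
    rw [Matrix.det_of_upperTriangular htri]
    refine Finset.prod_congr rfl fun i _ => ?_
    simp only [Matrix.submatrix_apply, Fin.succAbove_zero, bandM, Matrix.of_apply, Fin.val_succ]
    rw [if_pos trivial, if_neg (by omega), if_neg (by omega)]
    push_cast
    ring_nf
  have ml : ((bandM (n+2) d y).submatrix (Fin.last (n+1)).succAbove Fin.succ).det = 1 := by
    have htri : ((bandM (n+2) d y).submatrix (Fin.last (n+1)).succAbove Fin.succ).BlockTriangular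
        OrderDual.toDual := by
      intro i j hij
      have hij' : (i : Fin (n+1)) < j := hij
      simp only [Matrix.submatrix_apply, Fin.succAbove_last, bandM, Matrix.of_apply]
      rw [if_neg (by
          intro h
          have := congrArg Fin.val h
          simp only [Fin.coe_castSucc, Fin.val_succ] at this
          omega),
        if_neg (by simp only [Fin.coe_castSucc, Fin.val_succ]; omega),
        if_neg (by
          rintro ⟨h, -⟩
          simp only [Fin.coe_castSucc] at h
          omega)]
      ring
    rw [Matrix.det_of_lowerTriangular _ htri]
    rw [Finset.prod_eq_one]
    intro i _
    simp only [Matrix.submatrix_apply, Fin.succAbove_last, bandM, Matrix.of_apply]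
    rw [if_neg (by
        intro h
        have := congrArg Fin.val h
        simp only [Fin.coe_castSucc, Fin.val_succ] at this
        omega),
      if_pos (by simp), if_neg (by rintro ⟨h, -⟩; simp only [Fin.coe_castSucc] at h; omega)]
    ring
  rw [e0, el, m0, ml]
  have hprod : (∏ i ∈ Finset.range (n+2), d ((i : ℤ) + 1))
      = d 1 * ∏ i ∈ Finset.range (n+1), d ((i : ℕ) + 2 : ℕ) := by
    rw [Finset.prod_range_succ', mul_comm]
    have h01 : ((0:ℕ):ℤ) + 1 = 1 := by norm_num
    rw [h01]
    refine congrArg₂ _ rfl (Finset.prod_congr rfl fun i _ => ?_)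
    congr 1
  rw [hprod, Fin.prod_univ_eq_prod_range (fun i => d ((i : ℕ) + 2 : ℕ)) (n+1)]
  simp only [Fin.val_zero, Fin.val_last, pow_zero]
  ring

lemma pair_of_sum_prod {a b c d : ℂ} (hs : a + b = c + d) (hp : a * b = c * d) :
    ({a, b} : Multiset ℂ) = {c, d} := by
  have h : (a - c) * (a - d) = 0 := by linear_combination a * hs - hp
  rcases mul_eq_zero.1 h with h1 | h1
  · have hac : a = c := by linear_combination h1
    have hbd : b = d := by linear_combination hs - hac
    rw [hac, hbd]
  · have had : a = d := by linear_combination h1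
    have hbc : b = c := by linear_combination hs - had
    rw [had, hbc]
    exact Multiset.pair_comm d c

/-- Reindexing telescope. -/
lemma tele1 (h : ℤ → ℂ) (c : ℤ) (m : ℕ) (t : ℤ) :
    ((Multiset.range m).map fun j : ℕ => h (t + c - (j:ℤ)*c)) + {h (t + c - (m:ℤ)*c)}
      = {h (t + c)} + ((Multiset.range m).map fun j : ℕ => h (t - (j:ℤ)*c)) := by
  induction m with
  | zero => simp
  | succ m ih =>
    rw [Multiset.range_succ, Multiset.map_cons, Multiset.map_cons,
      ← Multiset.singleton_add, ← Multiset.singleton_add]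
    have harg : t + c - ((m+1 : ℕ) : ℤ)*c = t - (m:ℤ)*c := by push_cast; ring
    rw [harg]
    calc ({h (t + c - (m:ℤ)*c)} + (Multiset.range m).map fun j : ℕ => h (t + c - (j:ℤ)*c))
          + {h (t - (m:ℤ)*c)}
        = (((Multiset.range m).map fun j : ℕ => h (t + c - (j:ℤ)*c)) + {h (t + c - (m:ℤ)*c)})
          + {h (t - (m:ℤ)*c)} := by abel
      _ = ({h (t + c)} + (Multiset.range m).map fun j : ℕ => h (t - (j:ℤ)*c))
          + {h (t - (m:ℤ)*c)} := by rw [ih]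
      _ = {h (t + c)} + ({h (t - (m:ℤ)*c)} + (Multiset.range m).map fun j : ℕ => h (t - (j:ℤ)*c)) := by
          abel

/-- Telescope using the Lax pair relation. -/
lemma tele2 (f g : ℤ → ℂ) (Mz Kz : ℤ)
    (rel : ∀ s : ℤ, ({f s, g s} : Multiset ℂ) = {g (s - Mz), f (s - Kz)}) (m : ℕ) (t : ℤ) :
    ((Multiset.range m).map fun j : ℕ => g (t + Mz - (j:ℤ)*Kz)) + {f (t + Mz)}
      = {f (t + Mz - (m:ℤ)*Kz)} + ((Multiset.range m).map fun j : ℕ => g (t - (j:ℤ)*Kz)) := by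
  induction m with
  | zero => simp
  | succ m ih =>
    rw [Multiset.range_succ, Multiset.map_cons, Multiset.map_cons,
      ← Multiset.singleton_add, ← Multiset.singleton_add]
    have hrel := rel (t + Mz - (m:ℤ)*Kz)
    rw [Multiset.insert_eq_cons, Multiset.insert_eq_cons, ← Multiset.singleton_add,
      ← Multiset.singleton_add] at hrel
    have e1 : t + Mz - (m:ℤ)*Kz - Mz = t - (m:ℤ)*Kz := by ring
    have e2 : t + Mz - (m:ℤ)*Kz - Kz = t + Mz - ((m+1 : ℕ) : ℤ)*Kz := by push_cast; ring
    rw [e1, e2] at hrel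
    calc ({g (t + Mz - (m:ℤ)*Kz)} + (Multiset.range m).map fun j : ℕ => g (t + Mz - (j:ℤ)*Kz))
          + {f (t + Mz)}
        = {g (t + Mz - (m:ℤ)*Kz)} +
            (((Multiset.range m).map fun j : ℕ => g (t + Mz - (j:ℤ)*Kz)) + {f (t + Mz)}) := by abel
      _ = {g (t + Mz - (m:ℤ)*Kz)} +
            ({f (t + Mz - (m:ℤ)*Kz)} + (Multiset.range m).map fun j : ℕ => g (t - (j:ℤ)*Kz)) := by
          rw [ih]
      _ = ({f (t + Mz - (m:ℤ)*Kz)} + {g (t + Mz - (m:ℤ)*Kz)}) +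
            ((Multiset.range m).map fun j : ℕ => g (t - (j:ℤ)*Kz)) := by abel
      _ = ({g (t - (m:ℤ)*Kz)} + {f (t + Mz - ((m+1 : ℕ) : ℤ)*Kz)}) +
            ((Multiset.range m).map fun j : ℕ => g (t - (j:ℤ)*Kz)) := by rw [hrel]
      _ = {f (t + Mz - ((m+1 : ℕ) : ℤ)*Kz)} +
            ({g (t - (m:ℤ)*Kz)} + (Multiset.range m).map fun j : ℕ => g (t - (j:ℤ)*Kz)) := by abel

/-- Shift by `M` invariance. -/
lemma shiftM (f g : ℤ → ℂ) (M K : ℕ)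
    (rel : ∀ s : ℤ, ({f s, g s} : Multiset ℂ) = {g (s - (M:ℤ)), f (s - (K:ℤ))}) (t : ℤ) :
    ((Multiset.range K).map fun j : ℕ => f (t + (M:ℤ) - (j:ℤ)*(M:ℤ)))
      + ((Multiset.range M).map fun j : ℕ => g (t + (M:ℤ) - (j:ℤ)*(K:ℤ)))
    = ((Multiset.range K).map fun j : ℕ => f (t - (j:ℤ)*(M:ℤ)))
      + ((Multiset.range M).map fun j : ℕ => g (t - (j:ℤ)*(K:ℤ))) := by
  have h1 := tele1 f (M:ℤ) K t
  have h2 := tele2 f g (M:ℤ) (K:ℤ) rel M t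
  have e : t + (M:ℤ) - (M:ℤ)*(K:ℤ) = t + (M:ℤ) - (K:ℤ)*(M:ℤ) := by ring
  rw [e] at h2
  have key :
      (((Multiset.range K).map fun j : ℕ => f (t + (M:ℤ) - (j:ℤ)*(M:ℤ)))
        + ((Multiset.range M).map fun j : ℕ => g (t + (M:ℤ) - (j:ℤ)*(K:ℤ))))
        + ({f (t + (M:ℤ) - (K:ℤ)*(M:ℤ))} + {f (t + (M:ℤ))})
      = (((Multiset.range K).map fun j : ℕ => f (t - (j:ℤ)*(M:ℤ)))
        + ((Multiset.range M).map fun j : ℕ => g (t - (j:ℤ)*(K:ℤ))))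
        + ({f (t + (M:ℤ) - (K:ℤ)*(M:ℤ))} + {f (t + (M:ℤ))}) := by
    calc (((Multiset.range K).map fun j : ℕ => f (t + (M:ℤ) - (j:ℤ)*(M:ℤ)))
        + ((Multiset.range M).map fun j : ℕ => g (t + (M:ℤ) - (j:ℤ)*(K:ℤ))))
        + ({f (t + (M:ℤ) - (K:ℤ)*(M:ℤ))} + {f (t + (M:ℤ))})
        = (((Multiset.range K).map fun j : ℕ => f (t + (M:ℤ) - (j:ℤ)*(M:ℤ)))
            + {f (t + (M:ℤ) - (K:ℤ)*(M:ℤ))})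
          + (((Multiset.range M).map fun j : ℕ => g (t + (M:ℤ) - (j:ℤ)*(K:ℤ)))
            + {f (t + (M:ℤ))}) := by abel
      _ = ({f (t + (M:ℤ))} + ((Multiset.range K).map fun j : ℕ => f (t - (j:ℤ)*(M:ℤ))))
          + ({f (t + (M:ℤ) - (K:ℤ)*(M:ℤ))}
            + ((Multiset.range M).map fun j : ℕ => g (t - (j:ℤ)*(K:ℤ)))) := by rw [h1, h2]
      _ = (((Multiset.range K).map fun j : ℕ => f (t - (j:ℤ)*(M:ℤ)))
        + ((Multiset.range M).map fun j : ℕ => g (t - (j:ℤ)*(K:ℤ))))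
        + ({f (t + (M:ℤ) - (K:ℤ)*(M:ℤ))} + {f (t + (M:ℤ))}) := by abel
  exact add_right_cancel key

/-- Remark 2.1: under the periodic Lax equations with `gcd(M,K) = 1`,
the multiset of the `M+K` products is invariant under the time evolution. -/
theorem spec_multiset_invariant (M K N : ℕ) (hM : 0 < M) (hK : 0 < K)
    (hMK : Nat.Coprime M K) (hN : 2 ≤ N)
    (I V : ℤ → ℤ → ℂ)
    (hIper : ∀ n t : ℤ, I (n + N) t = I n t)
    (hVper : ∀ n t : ℤ, V (n + N) t = V n t)
    (hLax : ∀ (s : ℤ) (y : ℂ),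
      bandM N (fun n => V n s) y * bandM N (fun n => I n s) y =
        bandM N (fun n => I n (s - M)) y * bandM N (fun n => V n (s - K)) y) :
    ∀ t : ℤ, specMultiset M K N I V (t + 1) = specMultiset M K N I V t := by
  obtain ⟨m, rfl⟩ : ∃ m, N = m + 2 := ⟨N - 2, by omega⟩
  set F : ℤ → ℂ := fun s => ∏ n ∈ Finset.range (m+2), V ((n : ℤ) + 1) s with hF
  set G : ℤ → ℂ := fun s => ∏ n ∈ Finset.range (m+2), I ((n : ℤ) + 1) s with hG
  have rel : ∀ s : ℤ, ({F s, G s} : Multiset ℂ) = {G (s - (M:ℤ)), F (s - (K:ℤ))} := by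
    intro s
    have hdet : ∀ y : ℂ,
        (F s + (-1:ℂ)^(m+1)*y) * (G s + (-1:ℂ)^(m+1)*y)
          = (G (s - (M:ℤ)) + (-1:ℂ)^(m+1)*y) * (F (s - (K:ℤ)) + (-1:ℂ)^(m+1)*y) := by
      intro y
      have h := congrArg Matrix.det (hLax s y)
      rw [Matrix.det_mul, Matrix.det_mul, det_bandM, det_bandM, det_bandM, det_bandM] at h
      simpa [hF, hG] using h
    have hp : F s * G s = G (s - (M:ℤ)) * F (s - (K:ℤ)) := by
      have := hdet 0; simpa using this
    have he : (-1:ℂ)^(m+1) * (-1:ℂ)^(m+1) = 1 := by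
      rw [← mul_pow]; norm_num
    have he2 : (-1:ℂ)^(m+1) * -((-1:ℂ)^(m+1)) = -1 := by rw [mul_neg, he]
    have hsum : F s + G s = G (s - (M:ℤ)) + F (s - (K:ℤ)) := by
      have h1 := hdet ((-1:ℂ)^(m+1))
      have h2 := hdet (-((-1:ℂ)^(m+1)))
      rw [he] at h1
      rw [he2] at h2
      linear_combination (h1 - h2) / 2
    exact pair_of_sum_prod hsum hp
  have rel' : ∀ s : ℤ, ({G s, F s} : Multiset ℂ) = {F (s - (K:ℤ)), G (s - (M:ℤ))} := by
    intro s
    rw [Multiset.pair_comm, rel s, Multiset.pair_comm]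
  set S : ℤ → Multiset ℂ := fun t =>
    ((Multiset.range K).map fun j : ℕ => F (t - (j:ℤ)*(M:ℤ)))
      + ((Multiset.range M).map fun j : ℕ => G (t - (j:ℤ)*(K:ℤ))) with hS
  have hspec : ∀ t : ℤ, specMultiset M K (m+2) I V t = S t := by
    intro t
    unfold specMultiset
    simp only [hS, hF, hG]
    simp [Multiset.bind_singleton, Multiset.map_map, Function.comp]
  have hsM : ∀ t : ℤ, S (t + (M:ℤ)) = S t := by
    intro t
    simpa only [hS] using shiftM F G M K rel t
  have hsK : ∀ t : ℤ, S (t + (K:ℤ)) = S t := by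
    intro t
    have h := shiftM G F K M rel' t
    simp only [hS]
    abel_nf at h ⊢
    exact h
  have hM' : ∀ (z : ℤ) (t : ℤ), S (t + z*(M:ℤ)) = S t := by
    intro z
    induction z using Int.induction_on with
    | zero => intro t; norm_num
    | succ k ih =>
      intro t
      have e : t + ((k:ℤ)+1)*(M:ℤ) = (t + (k:ℤ)*(M:ℤ)) + (M:ℤ) := by ring
      rw [e, hsM, ih]
    | pred k ih =>
      intro t
      have e : t + (-(k:ℤ)-1)*(M:ℤ) + (M:ℤ) = t + (-(k:ℤ))*(M:ℤ) := by ring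
      have h := hsM (t + (-(k:ℤ)-1)*(M:ℤ))
      rw [e] at h
      exact h.symm.trans (ih t)
  have hK' : ∀ (z : ℤ) (t : ℤ), S (t + z*(K:ℤ)) = S t := by
    intro z
    induction z using Int.induction_on with
    | zero => intro t; norm_num
    | succ k ih =>
      intro t
      have e : t + ((k:ℤ)+1)*(K:ℤ) = (t + (k:ℤ)*(K:ℤ)) + (K:ℤ) := by ring
      rw [e, hsK, ih]
    | pred k ih =>
      intro t
      have e : t + (-(k:ℤ)-1)*(K:ℤ) + (K:ℤ) = t + (-(k:ℤ))*(K:ℤ) := by ring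
      have h := hsK (t + (-(k:ℤ)-1)*(K:ℤ))
      rw [e] at h
      exact h.symm.trans (ih t)
  intro t
  rw [hspec, hspec]
  have hbez := Nat.gcd_eq_gcd_ab M K
  rw [hMK] at hbez
  have e : t + 1 = (t + Nat.gcdB M K * (K:ℤ)) + Nat.gcdA M K * (M:ℤ) := by
    push_cast at hbez ⊢
    linear_combination hbez
  rw [e, hM', hK']
end
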